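/- arXiv:2602.14072 — 4 statements merged into one kernel-verified Lean document; each statement's English description precedes it below -/
import Mathlib

section
/- For complex numbers μ, ν with Re(μ) > 0 and Re(ν) > 0, and positive reals A, B, one has 1/(A^μ B^ν) = (Γ(μ+ν)/(Γ(μ)Γ(ν))) ∫₀¹ s^{μ-1} (1-s)^{ν-1} (sA + (1-s)B)^{-(μ+ν)} ds. -/
lemma cpow_exp_aux (x : ℝ) (hx : 0 < x) (w : ℂ) :
    (x:ℂ)^w = Complex.exp (Real.log x * w) := by
  rw [Complex.cpow_def_of_ne_zero (by exact_mod_cast hx.ne'), Complex.ofReal_log hx.le]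

lemma cpow_key (a b c d e : ℝ) (ha : 0 < a) (hb : 0 < b) (hc : 0 < c) (hd : 0 < d)
    (he : 0 < e) (μ ν : ℂ) :
    ((a*b/e^2 : ℝ):ℂ) * (((b*c/e : ℝ):ℂ)^(μ-1) * ((a*d/e : ℝ):ℂ)^(ν-1) *
        ((a*b/e : ℝ):ℂ)^(-(μ+ν)))
      = (a:ℂ)^(-μ) * (b:ℂ)^(-ν) * ((c:ℝ):ℂ)^(μ-1) * ((d:ℝ):ℂ)^(ν-1) := by
  have p1 : (0:ℝ) < a*b/e^2 := by positivity
  have p2 : (0:ℝ) < b*c/e := by positivity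
  have p3 : (0:ℝ) < a*d/e := by positivity
  have p4 : (0:ℝ) < a*b/e := by positivity
  have h0 : ((a*b/e^2 : ℝ):ℂ) = ((a*b/e^2 : ℝ):ℂ)^(1:ℂ) := (Complex.cpow_one _).symm
  rw [h0, cpow_exp_aux _ p1, cpow_exp_aux _ p2, cpow_exp_aux _ p3, cpow_exp_aux _ p4,
    cpow_exp_aux _ ha, cpow_exp_aux _ hb, cpow_exp_aux _ hc, cpow_exp_aux _ hd,
    ← Complex.exp_add, ← Complex.exp_add, ← Complex.exp_add,
    ← Complex.exp_add, ← Complex.exp_add, ← Complex.exp_add]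
  congr 1
  rw [Real.log_div (by positivity) (by positivity), Real.log_div (by positivity) (by positivity),
    Real.log_div (by positivity) (by positivity), Real.log_div (by positivity) (by positivity),
    Real.log_mul ha.ne' hb.ne',
    Real.log_mul hb.ne' hc.ne', Real.log_mul ha.ne' hd.ne', Real.log_pow]
  push_cast
  ring

/-- Proposition: for complex `μ, ν` with positive real parts and positive reals `A, B`,
`1/(A^μ B^ν) = Γ(μ+ν)/(Γ(μ)Γ(ν)) ∫₀¹ s^{μ-1}(1-s)^{ν-1}(sA+(1-s)B)^{-(μ+ν)} ds`. -/
theorem stmt0 (μ ν : ℂ) (hμ : 0 < μ.re) (hν : 0 < ν.re)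
    (A B : ℝ) (hA : 0 < A) (hB : 0 < B) :
    1 / ((A : ℂ) ^ μ * (B : ℂ) ^ ν) =
      Complex.Gamma (μ + ν) / (Complex.Gamma μ * Complex.Gamma ν) *
        ∫ s in Set.Ioo (0 : ℝ) 1,
          (s : ℂ) ^ (μ - 1) * ((1 - s : ℝ) : ℂ) ^ (ν - 1) *
            ((s * A + (1 - s) * B : ℝ) : ℂ) ^ (-(μ + ν)) := by
  set g : ℝ → ℂ := fun s =>
    (s : ℂ) ^ (μ - 1) * ((1 - s : ℝ) : ℂ) ^ (ν - 1) *
      ((s * A + (1 - s) * B : ℝ) : ℂ) ^ (-(μ + ν)) with hg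
  set D : ℝ → ℝ := fun t => A + (B - A) * t with hD
  set f : ℝ → ℝ := fun t => B * t / D t with hf
  have hDpos : ∀ t ∈ Set.Ioo (0:ℝ) 1, 0 < D t := by
    intro t ht
    have : D t = A * (1 - t) + B * t := by simp [hD]; ring
    rw [this]
    have h1 : 0 < A * (1 - t) := mul_pos hA (by linarith [ht.2])
    have h2 : 0 < B * t := mul_pos hB ht.1
    linarith
  -- f maps Ioo 0 1 into Ioo 0 1
  have hmaps : ∀ t ∈ Set.Ioo (0:ℝ) 1, f t ∈ Set.Ioo (0:ℝ) 1 := by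
    intro t ht
    have hd := hDpos t ht
    constructor
    · have h0 : 0 < B * t := by have := ht.1; positivity
      exact div_pos h0 hd
    · rw [div_lt_one hd]
      simp only [hD]
      nlinarith [ht.1, ht.2]
  -- image
  have himage : f '' Set.Ioo (0:ℝ) 1 = Set.Ioo (0:ℝ) 1 := by
    apply Set.Subset.antisymm
    · rintro s ⟨t, ht, rfl⟩; exact hmaps t ht
    · intro s hs
      set e : ℝ := A * s + B * (1 - s) with he
      have hepos : 0 < e := by
        have := hs.1; have := hs.2
        have : (0:ℝ) < A * s := by positivity
        nlinarith [hs.2]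
      refine ⟨A * s / e, ?_, ?_⟩
      · constructor
        · exact div_pos (by have := hs.1; positivity) hepos
        · rw [div_lt_one hepos]
          nlinarith [hs.1, hs.2]
      · have htmem : A * s / e ∈ Set.Ioo (0:ℝ) 1 := by
          constructor
          · exact div_pos (by have := hs.1; positivity) hepos
          · rw [div_lt_one hepos]; nlinarith [hs.1, hs.2]
        have hd := hDpos _ htmem
        simp only [hf]
        rw [div_eq_iff hd.ne']
        simp only [hD] at *
        field_simp
        ring
  -- injectivity
  have hinj : Set.InjOn f (Set.Ioo (0:ℝ) 1) := by
    intro t1 h1 t2 h2 heq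
    have hd1 := hDpos t1 h1
    have hd2 := hDpos t2 h2
    simp only [hf] at heq
    rw [div_eq_div_iff hd1.ne' hd2.ne'] at heq
    simp only [hD] at heq
    have hAB : 0 < A * B := by positivity
    nlinarith [heq]
  -- derivative
  have hderiv : ∀ t ∈ Set.Ioo (0:ℝ) 1, HasDerivAt f (A * B / (D t)^2) t := by
    intro t ht
    have hd := hDpos t ht
    have h1 : HasDerivAt (fun t : ℝ => B * t) B t := by
      simpa using (hasDerivAt_id t).const_mul B
    have h2 : HasDerivAt D (B - A) t := by
      simpa [hD] using ((hasDerivAt_id t).const_mul (B - A)).const_add A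
    have := h1.div h2 hd.ne'
    refine this.congr_deriv ?_
    simp only [hD]
    ring
  -- change of variables
  have key : ∫ s in Set.Ioo (0:ℝ) 1, g s
      = ∫ t in Set.Ioo (0:ℝ) 1, |A * B / (D t)^2| • g (f t) := by
    conv_lhs => rw [← himage]
    exact MeasureTheory.integral_image_eq_integral_abs_deriv_smul measurableSet_Ioo
      (fun t ht => (hderiv t ht).hasDerivWithinAt) hinj g
  -- pointwise simplification
  have hpt : ∀ t ∈ Set.Ioo (0:ℝ) 1,
      |A * B / (D t)^2| • g (f t)
        = ((A:ℂ)^(-μ) * (B:ℂ)^(-ν)) * ((t : ℂ) ^ (μ - 1) * ((1 - t : ℝ) : ℂ) ^ (ν - 1)) := by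
    intro t ht
    have hd := hDpos t ht
    have h1 : 1 - f t = A * (1 - t) / D t := by
      show 1 - B * t / D t = _
      rw [eq_div_iff hd.ne', sub_mul, div_mul_cancel₀ _ hd.ne']
      simp only [hD]; ring
    have h2 : B * t / D t * A + A * (1 - t) / D t * B = A * B / D t := by
      field_simp; ring
    have habs : |A * B / (D t)^2| = A * B / (D t)^2 := abs_of_pos (by positivity)
    rw [habs]
    have hfval : f t = B * t / D t := rfl
    simp only [hg, h1]
    simp only [hfval, h2]
    rw [Complex.real_smul]
    have := cpow_key A B t (1 - t) (D t) hA hB ht.1 (by linarith [ht.2]) hd μ ν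
    rw [this]
    ring
  rw [key, MeasureTheory.setIntegral_congr_fun measurableSet_Ioo hpt,
    MeasureTheory.integral_const_mul]
  -- identify with beta integral
  have hbeta : ∫ t in Set.Ioo (0:ℝ) 1, ((t : ℂ) ^ (μ - 1) * ((1 - t : ℝ) : ℂ) ^ (ν - 1))
      = Complex.betaIntegral μ ν := by
    rw [Complex.betaIntegral, intervalIntegral.integral_of_le zero_le_one,
      ← MeasureTheory.integral_Ioc_eq_integral_Ioo]
    congr 1
    ext x
    push_cast
    ring
  rw [hbeta]
  have hβ := Complex.Gamma_mul_Gamma_eq_betaIntegral hμ hν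
  have hΓμ := Complex.Gamma_ne_zero_of_re_pos hμ
  have hΓν := Complex.Gamma_ne_zero_of_re_pos hν
  have hΓs := Complex.Gamma_ne_zero_of_re_pos (s := μ + ν) (by simp [Complex.add_re]; linarith)
  have hβval : Complex.betaIntegral μ ν
      = Complex.Gamma μ * Complex.Gamma ν / Complex.Gamma (μ + ν) := by
    rw [eq_div_iff hΓs, hβ]; ring
  rw [hβval, Complex.cpow_neg, Complex.cpow_neg]
  have hAμ : (A:ℂ)^μ ≠ 0 := by
    simp only [ne_eq, Complex.cpow_eq_zero_iff, not_and_or, not_not]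
    left; exact_mod_cast hA.ne'
  have hBν : (B:ℂ)^ν ≠ 0 := by
    simp only [ne_eq, Complex.cpow_eq_zero_iff, not_and_or, not_not]
    left; exact_mod_cast hB.ne'
  field_simp
end

section
/- Let a, b, c be real numbers with c > a + b and c not a nonpositive integer. Then the Gauss hypergeometric function satisfies ₂F₁(a, b; c; 1) = Γ(c) Γ(c - a - b) / (Γ(c - a) Γ(c - b)). -/
open Filter Topology Finset

/-- Pochhammer evaluation. -/
noncomputable def Pe (x : ℝ) (n : ℕ) : ℝ := (ascPochhammer ℝ n).eval x

lemma Pe_zero (x : ℝ) : Pe x 0 = 1 := by simp [Pe]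

lemma Pe_succ (x : ℝ) (n : ℕ) : Pe x (n + 1) = Pe x n * (x + n) := by
  simp [Pe, ascPochhammer_succ_eval]

lemma Pe_succ_left (x : ℝ) (n : ℕ) : Pe x (n + 1) = x * Pe (x + 1) n := by
  simp [Pe, ascPochhammer_succ_left, Polynomial.eval_comp]

lemma Pe_eq_prod (x : ℝ) (n : ℕ) : Pe x n = ∏ j ∈ Finset.range n, (x + j) := by
  induction n with
  | zero => simp [Pe]
  | succ n ih => rw [Pe_succ, ih, Finset.prod_range_succ]

lemma Pe_pos {x : ℝ} (hx : 0 < x) (n : ℕ) : 0 < Pe x n :=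
  ascPochhammer_pos n x hx

lemma Pe_nonneg {x : ℝ} (hx : 0 ≤ x) (n : ℕ) : 0 ≤ Pe x n := by
  induction n with
  | zero => simp [Pe]
  | succ n ih => rw [Pe_succ]; exact mul_nonneg ih (by positivity)

lemma Pe_mono {x y : ℝ} (hx : 0 ≤ x) (hxy : x ≤ y) (n : ℕ) : Pe x n ≤ Pe y n := by
  induction n with
  | zero => simp [Pe_zero]
  | succ n ih =>
    rw [Pe_succ, Pe_succ]
    exact mul_le_mul ih (by linarith) (by positivity) (Pe_nonneg (hx.trans hxy) n)

lemma Pe_abs_le {x M : ℝ} (h : |x| ≤ M) (n : ℕ) : |Pe x n| ≤ Pe M n := by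
  have hM : 0 ≤ M := (abs_nonneg x).trans h
  induction n with
  | zero => simp [Pe_zero]
  | succ n ih =>
    rw [Pe_succ, Pe_succ, abs_mul]
    refine mul_le_mul ih ?_ (abs_nonneg _) (Pe_nonneg hM n)
    calc |x + n| ≤ |x| + n := by simpa using abs_add_le x n
    _ ≤ M + n := by linarith

lemma Pe_ne_zero {x : ℝ} (hx : ∀ k : ℕ, x ≠ -(k : ℝ)) (n : ℕ) : Pe x n ≠ 0 := by
  induction n with
  | zero => simp [Pe_zero]
  | succ n ih =>
    rw [Pe_succ]
    refine mul_ne_zero ih ?_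
    intro hxn
    exact hx n (by linarith)

lemma Pe_eq_zero {x : ℝ} {k : ℕ} (hx : x + k = 0) {n : ℕ} (hk : k < n) : Pe x n = 0 := by
  rw [Pe_eq_prod]
  exact Finset.prod_eq_zero (Finset.mem_range.mpr hk) hx

/-- The `s`-th term of the Gauss series at `z = 1`. -/
noncomputable def Gt (a b c : ℝ) (s : ℕ) : ℝ :=
  Pe a s * Pe b s / (Pe c s * (Nat.factorial s : ℝ))

lemma Gt_zero (a b c : ℝ) : Gt a b c 0 = 1 := by simp [Gt, Pe_zero]

lemma Gt_succ (a b : ℝ) {c : ℝ} (s : ℕ) (hPc : Pe c s ≠ 0) (hcs : c + s ≠ 0) :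
    Gt a b c (s + 1) = Gt a b c s * ((a + s) * (b + s) / ((c + s) * (s + 1))) := by
  have hf : (Nat.factorial s : ℝ) ≠ 0 := Nat.cast_ne_zero.mpr (Nat.factorial_ne_zero s)
  rw [Gt, Gt, Pe_succ, Pe_succ, Pe_succ, Nat.factorial_succ]
  push_cast
  field_simp

lemma Gt_shift_c (a b : ℝ) {c : ℝ} (s : ℕ) (hPc : Pe c s ≠ 0) (hcs : c + s ≠ 0)
    (hc0 : c ≠ 0) : Gt a b (c + 1) s = Gt a b c s * (c / (c + s)) := by
  have hf : (Nat.factorial s : ℝ) ≠ 0 := Nat.cast_ne_zero.mpr (Nat.factorial_ne_zero s)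
  have h1 : Pe c s * (c + s) = c * Pe (c + 1) s := by
    rw [← Pe_succ, Pe_succ_left]
  have hPc1 : Pe (c + 1) s ≠ 0 := by
    intro h0
    rw [h0, mul_zero] at h1
    exact (mul_ne_zero hPc hcs) h1
  rw [Gt, Gt]
  rw [div_mul_div_comm]
  rw [div_eq_div_iff (by exact mul_ne_zero hPc1 hf) (by exact mul_ne_zero (mul_ne_zero hPc hf) hcs)]
  linear_combination (Pe a s * Pe b s * (s.factorial : ℝ)) * h1

lemma Gt_summable_and_decay (a b c : ℝ) (hc : ∀ k : ℕ, c ≠ -(k : ℝ)) (h : a + b < c) :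
    Summable (Gt a b c) ∧ Tendsto (fun n : ℕ => (n : ℝ) * Gt a b c n) atTop (𝓝 0) := by
  set ε : ℝ := (c - a - b) / 2 with hεdef
  have hε : 0 < ε := by simp only [hεdef]; linarith
  set p : ℝ := 1 + ε with hpdef
  have hp : 1 ≤ p := by simp only [hpdef]; linarith
  have hp1 : 1 < p := by simp only [hpdef]; linarith
  obtain ⟨N₀, hN₀⟩ := exists_nat_gt (max (max (max |a| |b|) |c|) ((|a * b - c * (1 - p)| / ε) + p))
  set N := N₀ + 1 with hNdef
  have hNbig : (max (max (max |a| |b|) |c|) ((|a * b - c * (1 - p)| / ε) + p)) < N := by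
    have : (N₀ : ℝ) ≤ N := by exact_mod_cast Nat.le_succ N₀
    linarith
  have hNa : |a| < N := lt_of_le_of_lt (le_max_of_le_left (le_max_of_le_left (le_max_left _ _))) hNbig
  have hNb : |b| < N := lt_of_le_of_lt (le_max_of_le_left (le_max_of_le_left (le_max_right _ _))) hNbig
  have hNc : |c| < N := lt_of_le_of_lt (le_max_of_le_left (le_max_right _ _)) hNbig
  have hNk : (|a * b - c * (1 - p)| / ε) + p < N := lt_of_le_of_lt (le_max_right _ _) hNbig
  -- basic positivity for s ≥ N
  have hpos : ∀ s : ℕ, N ≤ s → 0 < a + s ∧ 0 < b + s ∧ 0 < c + s ∧ 0 < (s : ℝ) := by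
    intro s hs
    have hs' : (N : ℝ) ≤ s := by exact_mod_cast hs
    have hN1 : (1 : ℝ) ≤ N := by exact_mod_cast Nat.succ_le_succ (Nat.zero_le N₀)
    have ha' := abs_lt.mp hNa
    have hb' := abs_lt.mp hNb
    have hc' := abs_lt.mp hNc
    refine ⟨by linarith [ha'.1], by linarith [hb'.1], by linarith [hc'.1], by linarith⟩
  -- the key polynomial inequality
  have hkey : ∀ s : ℕ, N ≤ s → (a + s) * (b + s) ≤ (c + s) * ((s : ℝ) + 1 - p) := by
    intro s hs
    have hs' : (N : ℝ) ≤ s := by exact_mod_cast hs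
    have h1 : |a * b - c * (1 - p)| / ε + p < (s : ℝ) := lt_of_lt_of_le hNk hs'
    have h2 : a * b - c * (1 - p) ≤ |a * b - c * (1 - p)| := le_abs_self _
    have h3 : 0 ≤ |a * b - c * (1 - p)| := abs_nonneg _
    have h4 : |a * b - c * (1 - p)| < ((s : ℝ) - p) * ε := by
      have h5 : |a * b - c * (1 - p)| / ε < (s : ℝ) - p := by linarith
      exact (div_lt_iff₀ hε).mp h5
    have hcp : c + 1 - p - a - b = ε := by simp only [hpdef, hεdef]; ring
    nlinarith [h4, h2]
  -- ratio inequality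
  have ratio_le : ∀ s : ℕ, N ≤ s →
      |Gt a b c (s + 1)| * ((s : ℝ) + 1) ^ p ≤ |Gt a b c s| * (s : ℝ) ^ p := by
    intro s hs
    obtain ⟨has, hbs, hcs, hs0⟩ := hpos s hs
    have hPc : Pe c s ≠ 0 := Pe_ne_zero hc s
    have hr := Gt_succ a b s hPc (by linarith)
    set σ : ℝ := (s : ℝ) with hσ
    have hσ1 : (0:ℝ) < σ + 1 := by linarith
    have hrpos : 0 ≤ (a + σ) * (b + σ) / ((c + σ) * (σ + 1)) := by positivity
    -- Bernoulli
    have hbern : 1 + p * (-(1 / (σ + 1))) ≤ (1 + (-(1 / (σ + 1)))) ^ p := by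
      apply one_add_mul_self_le_rpow_one_add _ hp
      rw [neg_le, neg_neg]
      rw [div_le_one hσ1]; linarith
    have heq1 : 1 + (-(1 / (σ + 1))) = σ / (σ + 1) := by field_simp; ring
    have hr2 : (a + σ) * (b + σ) / ((c + σ) * (σ + 1)) ≤ 1 + p * (-(1 / (σ + 1))) := by
      rw [div_le_iff₀ (by positivity)]
      have : (1 + p * (-(1 / (σ + 1)))) = (σ + 1 - p) / (σ + 1) := by field_simp; ring
      rw [this, div_mul_eq_mul_div, le_div_iff₀ hσ1]
      nlinarith [hkey s hs, hσ1]
    have hr3 : (a + σ) * (b + σ) / ((c + σ) * (σ + 1)) ≤ (σ / (σ + 1)) ^ p := by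
      rw [← heq1]; exact hr2.trans hbern
    have hmul : (σ / (σ + 1)) ^ p * (σ + 1) ^ p = σ ^ p := by
      rw [Real.div_rpow hs0.le hσ1.le, div_mul_cancel₀]
      exact (Real.rpow_pos_of_pos hσ1 p).ne'
    rw [hr, abs_mul, abs_of_nonneg hrpos, mul_assoc]
    apply mul_le_mul_of_nonneg_left _ (abs_nonneg _)
    calc (a + σ) * (b + σ) / ((c + σ) * (σ + 1)) * (σ + 1) ^ p
        ≤ (σ / (σ + 1)) ^ p * (σ + 1) ^ p := by
          apply mul_le_mul_of_nonneg_right hr3 (Real.rpow_pos_of_pos hσ1 p).le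
    _ = σ ^ p := hmul
  -- the uniform bound
  set C : ℝ := |Gt a b c N| * (N : ℝ) ^ p with hCdef
  have hC0 : 0 ≤ C := by positivity
  have bnd : ∀ s : ℕ, N ≤ s → |Gt a b c s| * (s : ℝ) ^ p ≤ C := by
    intro s hs
    induction s, hs using Nat.le_induction with
    | base => exact le_of_eq rfl
    | succ n hn ih =>
      have h1 := (ratio_le n hn).trans ih
      push_cast
      exact h1
  have hNpos : (0:ℝ) < N := by positivity
  -- summability
  have S1 : Summable (fun n : ℕ => ((n : ℝ) ^ p)⁻¹) := Real.summable_nat_rpow_inv.mpr hp1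
  have S2 : Summable (fun m : ℕ => C * (((m + N : ℕ) : ℝ) ^ p)⁻¹) :=
    ((summable_nat_add_iff N).mpr S1).mul_left C
  have comp : ∀ m : ℕ, |Gt a b c (m + N)| ≤ C * (((m + N : ℕ) : ℝ) ^ p)⁻¹ := by
    intro m
    have hmN0 : 0 < m + N := Nat.add_pos_right m (Nat.succ_pos N₀)
    have hx : (0:ℝ) < ((m + N : ℕ) : ℝ) ^ p :=
      Real.rpow_pos_of_pos (by exact_mod_cast hmN0) p
    rw [le_mul_inv_iff₀ hx]
    exact bnd (m + N) (Nat.le_add_left N m)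
  have S3 : Summable (fun m : ℕ => |Gt a b c (m + N)|) :=
    Summable.of_nonneg_of_le (fun m => abs_nonneg _) comp S2
  have S4 : Summable (fun m : ℕ => |Gt a b c m|) := (summable_nat_add_iff N).mp S3
  have hSummable : Summable (Gt a b c) := summable_abs_iff.mp S4
  refine ⟨hSummable, ?_⟩
  -- decay
  have hnorm : ∀ s : ℕ, N ≤ s → ‖(s : ℝ) * Gt a b c s‖ ≤ C * (s : ℝ) ^ (-ε) := by
    intro s hs
    have hs0 : (0:ℝ) < s := lt_of_lt_of_le hNpos (by exact_mod_cast hs)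
    have h4 : |Gt a b c s| ≤ C * ((s:ℝ) ^ p)⁻¹ := by
      rw [le_mul_inv_iff₀ (Real.rpow_pos_of_pos hs0 p)]
      exact bnd s hs
    have h2 : (s:ℝ) ^ ((1:ℝ) - p) = (s:ℝ) * ((s:ℝ) ^ p)⁻¹ := by
      rw [Real.rpow_sub hs0, Real.rpow_one, div_eq_mul_inv]
    have h3 : (1 : ℝ) - p = -ε := by simp only [hpdef]; ring
    calc ‖(s:ℝ) * Gt a b c s‖ = (s:ℝ) * |Gt a b c s| := by
          rw [Real.norm_eq_abs, abs_mul, abs_of_pos hs0]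
    _ ≤ (s:ℝ) * (C * ((s:ℝ)^p)⁻¹) := mul_le_mul_of_nonneg_left h4 hs0.le
    _ = C * ((s:ℝ) ^ ((1:ℝ) - p)) := by rw [h2]; ring
    _ = C * (s:ℝ) ^ (-ε) := by rw [h3]
  have gtend : Tendsto (fun s : ℕ => C * (s:ℝ) ^ (-ε)) atTop (𝓝 0) := by
    have h5 := (tendsto_rpow_neg_atTop hε).comp tendsto_natCast_atTop_atTop (α := ℕ)
    simpa using h5.const_mul C
  exact squeeze_zero_norm' (eventually_atTop.mpr ⟨N, hnorm⟩) gtend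

lemma hc_add_one {c : ℝ} (hc : ∀ k : ℕ, c ≠ -(k : ℝ)) : ∀ k : ℕ, c + 1 ≠ -(k : ℝ) := by
  intro k hk
  exact hc (k + 1) (by push_cast; linarith)

lemma Gt_identity (a b : ℝ) {c : ℝ} (hc : ∀ k : ℕ, c ≠ -(k : ℝ)) (s : ℕ) :
    c * (c - a - b) * Gt a b c s - (c - a) * (c - b) * Gt a b (c + 1) s
      = c * s * Gt a b c s - c * ((s : ℝ) + 1) * Gt a b c (s + 1) := by
  have hPc : Pe c s ≠ 0 := Pe_ne_zero hc s
  have hcs : c + (s : ℝ) ≠ 0 := fun h0 => hc s (by linarith)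
  have hc0 : c ≠ 0 := fun h0 => hc 0 (by simp [h0])
  have hs1 : (s : ℝ) + 1 ≠ 0 := by positivity
  rw [Gt_succ a b s hPc hcs, Gt_shift_c a b s hPc hcs hc0]
  field_simp
  ring

lemma contiguous (a b : ℝ) {c : ℝ} (hc : ∀ k : ℕ, c ≠ -(k : ℝ)) (h : a + b < c) :
    c * (c - a - b) * ∑' s, Gt a b c s = (c - a) * (c - b) * ∑' s, Gt a b (c + 1) s := by
  have hc1 := hc_add_one hc
  obtain ⟨hsum, hdecay⟩ := Gt_summable_and_decay a b c hc h
  obtain ⟨hsum1, -⟩ := Gt_summable_and_decay a b (c + 1) hc1 (by linarith)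
  set d : ℕ → ℝ := fun s =>
    c * (c - a - b) * Gt a b c s - (c - a) * (c - b) * Gt a b (c + 1) s with hd
  have hdsum : Summable d := (hsum.mul_left _).sub (hsum1.mul_left _)
  have htsum : ∑' s, d s =
      c * (c - a - b) * ∑' s, Gt a b c s - (c - a) * (c - b) * ∑' s, Gt a b (c + 1) s := by
    rw [Summable.tsum_sub (hsum.mul_left _) (hsum1.mul_left _), tsum_mul_left, tsum_mul_left]
  have hpart : ∀ n : ℕ, ∑ s ∈ Finset.range n, d s = -(c * n * Gt a b c n) := by
    intro n
    have hterm : ∀ s : ℕ, d s = (fun k : ℕ => c * k * Gt a b c k) s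
        - (fun k : ℕ => c * k * Gt a b c k) (s + 1) := by
      intro s
      simp only [hd]
      rw [Gt_identity a b hc s]
      push_cast
      ring
    calc ∑ s ∈ Finset.range n, d s
        = ∑ s ∈ Finset.range n, ((fun k : ℕ => c * k * Gt a b c k) s
            - (fun k : ℕ => c * k * Gt a b c k) (s + 1)) :=
          Finset.sum_congr rfl fun s _ => hterm s
      _ = (fun k : ℕ => c * k * Gt a b c k) 0 - (fun k : ℕ => c * k * Gt a b c k) n :=
          Finset.sum_range_sub' _ n
      _ = -(c * n * Gt a b c n) := by simp
  have h1 : Tendsto (fun n => ∑ s ∈ Finset.range n, d s) atTop (𝓝 (∑' s, d s)) :=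
    hdsum.hasSum.tendsto_sum_nat
  simp_rw [hpart] at h1
  have h2 : Tendsto (fun n : ℕ => -(c * n * Gt a b c n)) atTop (𝓝 0) := by
    have h3 := hdecay.const_mul c
    rw [mul_zero] at h3
    have h4 := h3.neg
    rw [neg_zero] at h4
    refine h4.congr fun n => ?_
    ring
  have h5 : ∑' s, d s = 0 := tendsto_nhds_unique h1 h2
  rw [htsum] at h5
  linarith

lemma iterated (a b : ℝ) {c : ℝ} (hc : ∀ k : ℕ, c ≠ -(k : ℝ)) (h : a + b < c) (n : ℕ) :
    (∑' s, Gt a b c s) * (Pe c n * Pe (c - a - b) n)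
      = (Pe (c - a) n * Pe (c - b) n) * ∑' s, Gt a b (c + n) s := by
  induction n with
  | zero => simp [Pe_zero]
  | succ n ih =>
    have hcn : ∀ k : ℕ, c + (n : ℝ) ≠ -(k : ℝ) := by
      intro k hk
      exact hc (k + n) (by push_cast; linarith)
    have hn : a + b < c + n := by
      have h0 : (0:ℝ) ≤ n := Nat.cast_nonneg n
      linarith
    have hstep := contiguous a b hcn hn
    have hcast : c + ((n + 1 : ℕ) : ℝ) = c + (n : ℝ) + 1 := by push_cast; ring
    rw [Pe_succ, Pe_succ, Pe_succ, Pe_succ, hcast]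
    linear_combination ((c + (n:ℝ)) * (c - a - b + n)) * ih
      + (Pe (c - a) n * Pe (c - b) n) * hstep

lemma tendsto_F_one (a b : ℝ) {c : ℝ} (hc : ∀ k : ℕ, c ≠ -(k : ℝ)) (h : a + b < c) :
    Tendsto (fun n : ℕ => ∑' s, Gt a b (c + n) s) atTop (𝓝 1) := by
  set M : ℝ := max (max |a| |b|) 1 with hM
  have hMa : |a| ≤ M := le_max_of_le_left (le_max_left _ _)
  have hMb : |b| ≤ M := le_max_of_le_left (le_max_right _ _)
  have hM1 : (1:ℝ) ≤ M := le_max_right _ _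
  obtain ⟨m₀, hm₀⟩ := exists_nat_gt (2 * M + 2 - c)
  set c₀ : ℝ := c + m₀ with hc₀
  have hc₀big : 2 * M + 2 < c₀ + 1 := by simp only [hc₀]; linarith
  have hc₀pos : 0 < c₀ := by linarith
  have hc₀ne : ∀ k : ℕ, c₀ ≠ -(k : ℝ) := by
    intro k hk
    have : (0:ℝ) ≤ k := Nat.cast_nonneg k
    linarith
  -- the dominating sequence
  set w : ℕ → ℝ := fun s => c₀ * Gt M M c₀ (s + 1) with hw
  have hw_eq : ∀ s : ℕ, w s = Pe M (s + 1) * Pe M (s + 1) /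
      (Pe (c₀ + 1) s * ((s + 1).factorial : ℝ)) := by
    intro s
    have hPc1 : Pe (c₀ + 1) s ≠ 0 := (Pe_pos (by linarith) s).ne'
    have hf : ((s + 1).factorial : ℝ) ≠ 0 := Nat.cast_ne_zero.mpr (Nat.factorial_ne_zero _)
    simp only [hw, Gt]
    rw [Pe_succ_left c₀ s]
    field_simp
  have hwsum : Summable w := by
    have := (Gt_summable_and_decay M M c₀ hc₀ne (by linarith)).1
    exact (((summable_nat_add_iff 1).mpr this).mul_left c₀).congr fun s => by
      simp [hw]
  have hwnonneg : ∀ s, 0 ≤ w s := by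
    intro s
    rw [hw_eq s]
    have h1 : 0 ≤ Pe M (s+1) := Pe_nonneg (by linarith) _
    have h2 : 0 < Pe (c₀ + 1) s := Pe_pos (by linarith) s
    positivity
  set W : ℝ := ∑' s, w s with hW
  -- termwise bound for n ≥ m₀
  have hterm : ∀ n : ℕ, m₀ ≤ n → ∀ s : ℕ,
      |Gt a b (c + n) (s + 1)| ≤ w s / (c + n) := by
    intro n hn s
    have hcn : (2:ℝ) * M + 1 ≤ c + n := by
      have : (m₀ : ℝ) ≤ n := by exact_mod_cast hn
      simp only [hc₀] at hc₀big
      linarith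
    have hcnpos : (0:ℝ) < c + n := by linarith
    have hPcn : 0 < Pe (c + n + 1) s := Pe_pos (by linarith) s
    have hPc0 : 0 < Pe (c₀ + 1) s := Pe_pos (by linarith) s
    have hf : (0:ℝ) < ((s + 1).factorial : ℝ) := by
      exact_mod_cast Nat.factorial_pos _
    have hmono : Pe (c₀ + 1) s ≤ Pe (c + n + 1) s := by
      apply Pe_mono (by linarith) (by
        have : (m₀ : ℝ) ≤ n := by exact_mod_cast hn
        simp only [hc₀]; linarith)
    have hPM : 0 ≤ Pe M (s + 1) := Pe_nonneg (by linarith) _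
    have habs : |Gt a b (c + n) (s + 1)| ≤
        Pe M (s + 1) * Pe M (s + 1) / (Pe (c + n) (s + 1) * ((s + 1).factorial : ℝ)) := by
      have h6 := Pe_pos hcnpos (s + 1)
      have hden : 0 < Pe (c + n) (s + 1) * ((s + 1).factorial : ℝ) := by positivity
      rw [Gt, abs_div, abs_mul, abs_of_pos hden]
      gcongr
      · exact Pe_abs_le hMa _
      · exact Pe_abs_le hMb _
    refine habs.trans ?_
    have hPe1 : Pe (c + n) (s + 1) = (c + n) * Pe (c + n + 1) s := Pe_succ_left _ _
    calc Pe M (s + 1) * Pe M (s + 1) / (Pe (c + n) (s + 1) * ((s + 1).factorial : ℝ))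
        = Pe M (s + 1) * Pe M (s + 1) /
            ((c + n) * (Pe (c + n + 1) s * ((s + 1).factorial : ℝ))) := by
          rw [hPe1, mul_assoc]
      _ ≤ Pe M (s + 1) * Pe M (s + 1) /
            ((c + n) * (Pe (c₀ + 1) s * ((s + 1).factorial : ℝ))) := by
          gcongr
      _ = w s / (c + n) := by
          rw [hw_eq s, div_div]
          ring_nf
  -- now assemble
  have key : ∀ n : ℕ, m₀ ≤ n → ‖(∑' s, Gt a b (c + n) s) - 1‖ ≤ W * (c + n)⁻¹ := by
    intro n hn
    have hcnpos : (0:ℝ) < c + n := by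
      have h1 : (m₀ : ℝ) ≤ n := by exact_mod_cast hn
      have hMn : (0:ℝ) ≤ M := by linarith
      simp only [hc₀] at hc₀big
      linarith
    have hcn' : ∀ k : ℕ, c + (n : ℝ) ≠ -(k : ℝ) := by
      intro k hk
      have : (0:ℝ) ≤ k := Nat.cast_nonneg k
      linarith
    have hn' : a + b < c + n := by
      have : (0:ℝ) ≤ n := Nat.cast_nonneg n
      linarith
    have hsummn : Summable (Gt a b (c + (n:ℝ))) := (Gt_summable_and_decay a b _ hcn' hn').1
    have hzero_add : ∑' s, Gt a b (c + (n:ℝ)) s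
        = Gt a b (c + (n:ℝ)) 0 + ∑' s, Gt a b (c + (n:ℝ)) (s + 1) := Summable.tsum_eq_zero_add hsummn
    have hshift : Summable (fun s => Gt a b (c + (n:ℝ)) (s + 1)) :=
      (summable_nat_add_iff 1).mpr hsummn
    have hsum_le : ‖∑' s, Gt a b (c + (n:ℝ)) (s + 1)‖ ≤ ∑' s, w s / (c + n) := by
      refine (norm_tsum_le_tsum_norm (f := fun s => Gt a b (c + (n:ℝ)) (s + 1)) ?_).trans ?_
      · exact hshift.abs.congr fun s => (Real.norm_eq_abs _).symm
      · apply Summable.tsum_le_tsum (fun s => by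
          simpa [Real.norm_eq_abs] using hterm n hn s)
          (hshift.abs.congr fun s => (Real.norm_eq_abs _).symm)
          (hwsum.div_const (c + n))
    rw [hzero_add, Gt_zero]
    simp only [add_sub_cancel_left]
    refine hsum_le.trans (le_of_eq ?_)
    rw [tsum_div_const]
    rw [div_eq_mul_inv]
  -- limit
  have hlim0 : Tendsto (fun n : ℕ => W * (c + n)⁻¹) atTop (𝓝 0) := by
    have h1 : Tendsto (fun n : ℕ => c + (n : ℝ)) atTop atTop :=
      tendsto_atTop_add_const_left _ c tendsto_natCast_atTop_atTop
    have h2 := (tendsto_inv_atTop_zero.comp h1).const_mul W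
    simpa using h2
  have hdiff : Tendsto (fun n : ℕ => (∑' s, Gt a b (c + n) s) - 1) atTop (𝓝 0) :=
    squeeze_zero_norm' (eventually_atTop.mpr ⟨m₀, key⟩) hlim0
  have := hdiff.add_const 1
  simpa using this

lemma ratio_tendsto (a b : ℝ) {c : ℝ} (hc : ∀ k : ℕ, c ≠ -(k : ℝ)) (h : a + b < c)
    (hca : ∀ k : ℕ, c - a ≠ -(k : ℝ)) (hcb : ∀ k : ℕ, c - b ≠ -(k : ℝ)) :
    Tendsto (fun n : ℕ => (Pe (c - a) n * Pe (c - b) n) / (Pe c n * Pe (c - a - b) n)) atTop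
      (𝓝 (Real.Gamma c * Real.Gamma (c - a - b) /
        (Real.Gamma (c - a) * Real.Gamma (c - b)))) := by
  have hcab : ∀ k : ℕ, c - a - b ≠ -(k : ℝ) := by
    intro k hk
    have : (0:ℝ) ≤ k := Nat.cast_nonneg k
    linarith
  have hGS : ∀ (x : ℝ) (n : ℕ),
      Real.GammaSeq x n = (n:ℝ) ^ x * (n.factorial : ℝ) / Pe x (n + 1) := by
    intro x n
    rw [Real.GammaSeq, Pe_eq_prod]
  have hGa : Real.Gamma (c - a) ≠ 0 := Real.Gamma_ne_zero hca
  have hGb : Real.Gamma (c - b) ≠ 0 := Real.Gamma_ne_zero hcb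
  have hmain : Tendsto (fun n : ℕ =>
      Real.GammaSeq c n * Real.GammaSeq (c - a - b) n /
        (Real.GammaSeq (c - a) n * Real.GammaSeq (c - b) n)) atTop
      (𝓝 (Real.Gamma c * Real.Gamma (c - a - b) /
        (Real.Gamma (c - a) * Real.Gamma (c - b)))) := by
    exact ((Real.GammaSeq_tendsto_Gamma c).mul
      (Real.GammaSeq_tendsto_Gamma (c - a - b))).div
      ((Real.GammaSeq_tendsto_Gamma (c - a)).mul (Real.GammaSeq_tendsto_Gamma (c - b)))
      (mul_ne_zero hGa hGb)
  have heq : ∀ n : ℕ, 1 ≤ n →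
      Real.GammaSeq c n * Real.GammaSeq (c - a - b) n /
        (Real.GammaSeq (c - a) n * Real.GammaSeq (c - b) n)
      = (Pe (c - a) (n + 1) * Pe (c - b) (n + 1)) /
          (Pe c (n + 1) * Pe (c - a - b) (n + 1)) := by
    intro n hn
    have hn0 : (0:ℝ) < n := by exact_mod_cast hn
    have hf : (n.factorial : ℝ) ≠ 0 := Nat.cast_ne_zero.mpr (Nat.factorial_ne_zero n)
    have hPc : Pe c (n + 1) ≠ 0 := Pe_ne_zero hc _
    have hPca : Pe (c - a) (n + 1) ≠ 0 := Pe_ne_zero hca _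
    have hPcb : Pe (c - b) (n + 1) ≠ 0 := Pe_ne_zero hcb _
    have hPcab : Pe (c - a - b) (n + 1) ≠ 0 := Pe_ne_zero hcab _
    have hr1 : (n:ℝ) ^ c ≠ 0 := (Real.rpow_pos_of_pos hn0 c).ne'
    have hr2 : (n:ℝ) ^ (c - a - b) ≠ 0 := (Real.rpow_pos_of_pos hn0 _).ne'
    have hr3 : (n:ℝ) ^ (c - a) ≠ 0 := (Real.rpow_pos_of_pos hn0 _).ne'
    have hr4 : (n:ℝ) ^ (c - b) ≠ 0 := (Real.rpow_pos_of_pos hn0 _).ne'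
    have key : (n:ℝ) ^ c * (n:ℝ) ^ (c - a - b) = (n:ℝ) ^ (c - a) * (n:ℝ) ^ (c - b) := by
      rw [← Real.rpow_add hn0, ← Real.rpow_add hn0]
      ring_nf
    rw [hGS, hGS, hGS, hGS]
    field_simp
    linear_combination key
  have hmain2 : Tendsto (fun n : ℕ =>
      (Pe (c - a) (n + 1) * Pe (c - b) (n + 1)) /
        (Pe c (n + 1) * Pe (c - a - b) (n + 1))) atTop
      (𝓝 (Real.Gamma c * Real.Gamma (c - a - b) /
        (Real.Gamma (c - a) * Real.Gamma (c - b)))) := by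
    refine hmain.congr' ?_
    filter_upwards [eventually_ge_atTop 1] with n hn
    exact heq n hn
  exact (tendsto_add_atTop_iff_nat 1).mp hmain2

/-- The Gauss hypergeometric function, defined by its series. -/
noncomputable def hyp2F1 (a b c z : ℝ) : ℝ :=
  ∑' s : ℕ, ((ascPochhammer ℝ s).eval a * (ascPochhammer ℝ s).eval b /
    (ascPochhammer ℝ s).eval c) * z ^ s / (Nat.factorial s : ℝ)

/-- Gauss summation formula at `z = 1`. -/
theorem stmt4 (a b c : ℝ) (hc : ∀ k : ℕ, c ≠ -(k : ℝ)) (h : a + b < c) :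
    hyp2F1 a b c 1 =
      Real.Gamma c * Real.Gamma (c - a - b) /
        (Real.Gamma (c - a) * Real.Gamma (c - b)) := by
  have hF : hyp2F1 a b c 1 = ∑' s, Gt a b c s := by
    unfold hyp2F1 Gt Pe
    refine tsum_congr fun s => ?_
    rw [one_pow, mul_one, div_div]
  rw [hF]
  have hcab0 : 0 < c - a - b := by linarith
  by_cases hdeg : (∃ k : ℕ, c - a = -(k : ℝ)) ∨ (∃ k : ℕ, c - b = -(k : ℝ))
  · -- degenerate case : RHS has a zero denominator and LHS vanishes
    have hR : Real.Gamma (c - a) * Real.Gamma (c - b) = 0 := by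
      rcases hdeg with ⟨k, hk⟩ | ⟨k, hk⟩
      · rw [hk, Real.Gamma_neg_nat_eq_zero, zero_mul]
      · rw [hk, Real.Gamma_neg_nat_eq_zero, mul_zero]
    rw [hR, div_zero]
    obtain ⟨k, hk⟩ : ∃ k : ℕ, Pe (c - a) (k + 1) * Pe (c - b) (k + 1) = 0 := by
      rcases hdeg with ⟨k, hk⟩ | ⟨k, hk⟩
      · exact ⟨k, by rw [Pe_eq_zero (by linarith : c - a + (k:ℝ) = 0) k.lt_succ_self, zero_mul]⟩
      · exact ⟨k, by rw [Pe_eq_zero (by linarith : c - b + (k:ℝ) = 0) k.lt_succ_self, mul_zero]⟩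
    have hit := iterated a b hc h (k + 1)
    rw [hk, zero_mul] at hit
    have hPc : Pe c (k + 1) ≠ 0 := Pe_ne_zero hc _
    have hPcab : Pe (c - a - b) (k + 1) ≠ 0 := (Pe_pos hcab0 _).ne'
    have := mul_eq_zero.mp hit
    rcases this with h0 | h0
    · exact h0
    · exact absurd h0 (mul_ne_zero hPc hPcab)
  · -- nondegenerate case
    push_neg at hdeg
    obtain ⟨hca, hcb⟩ := hdeg
    have h1 := (ratio_tendsto a b hc h hca hcb).mul (tendsto_F_one a b hc h)
    have h2 : ∀ n : ℕ,
        (Pe (c - a) n * Pe (c - b) n) / (Pe c n * Pe (c - a - b) n) *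
          (∑' s, Gt a b (c + n) s) = ∑' s, Gt a b c s := by
      intro n
      have hPc : Pe c n ≠ 0 := Pe_ne_zero hc n
      have hPcab : Pe (c - a - b) n ≠ 0 := (Pe_pos hcab0 n).ne'
      have hit := iterated a b hc h n
      rw [div_mul_eq_mul_div, div_eq_iff (mul_ne_zero hPc hPcab)]
      linear_combination -hit
    have h3 : Tendsto (fun _ : ℕ => ∑' s, Gt a b c s) atTop
        (𝓝 (Real.Gamma c * Real.Gamma (c - a - b) /
          (Real.Gamma (c - a) * Real.Gamma (c - b)) * 1)) := h1.congr h2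
    have h4 := tendsto_nhds_unique tendsto_const_nhds h3
    rw [mul_one] at h4
    exact h4
end

section
/- For real a, b, c with c not a nonpositive integer, the function F(z) = ₂F₁(a, b; c; z) satisfies on (0,1) the hypergeometric differential equation z(1-z) F''(z) + (c - (a+b+1) z) F'(z) - a b F(z) = 0. -/
open FormalMultilinearSeries

/-- Term-wise derivative of a scalar power series within its ball of convergence. -/
lemma aux_deriv_hasSum {κ : ℕ → ℝ} {r : ENNReal}
    (hr : HasFPowerSeriesOnBall (ofScalars ℝ κ).sum (ofScalars ℝ κ) 0 r)
    {z : ℝ} (hz0 : z ≠ 0) (hzr : (‖z‖₊ : ENNReal) < r) :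
    HasSum (fun n : ℕ => ((n : ℝ) + 1) * κ (n + 1) * z ^ n)
      (deriv (ofScalars ℝ κ).sum z) := by
  have hd := hr.fderiv
  have hmem : z ∈ Metric.eball (0 : ℝ) r := by
    simpa [Metric.mem_eball, edist_eq_enorm_sub, enorm_eq_nnnorm] using hzr
  have hs := hd.hasSum hmem
  rw [zero_add] at hs
  have hs2 := (ContinuousLinearMap.apply ℝ ℝ z).hasSum hs
  have hterm : ∀ n : ℕ, (ContinuousLinearMap.apply ℝ ℝ z)
      ((ofScalars ℝ κ).derivSeries n fun _ => z) = (n + 1 : ℕ) • (κ (n + 1) • z ^ (n + 1)) := by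
    intro n
    rw [ContinuousLinearMap.apply_apply, derivSeries_apply_diag, ofScalars_apply_eq]
  have hval : (ContinuousLinearMap.apply ℝ ℝ z) (fderiv ℝ (ofScalars ℝ κ).sum z)
      = z * deriv (ofScalars ℝ κ).sum z := by
    rw [ContinuousLinearMap.apply_apply]
    calc fderiv ℝ (ofScalars ℝ κ).sum z z
        = fderiv ℝ (ofScalars ℝ κ).sum z (z • 1) := by rw [smul_eq_mul, mul_one]
      _ = z • fderiv ℝ (ofScalars ℝ κ).sum z 1 := (fderiv ℝ (ofScalars ℝ κ).sum z).map_smul z 1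
      _ = z * deriv (ofScalars ℝ κ).sum z := by rw [smul_eq_mul]; rfl
  rw [hval] at hs2
  simp only [hterm] at hs2
  have := hs2.div_const z
  rw [mul_div_cancel_left₀ _ hz0] at this
  convert this using 2 with n
  case e'_5 =>
    field_simp [pow_succ]
    ring
  rfl

/-- The radius of the term-wise derivative series is at least the original radius. -/
lemma aux_radius_le (κ : ℕ → ℝ) :
    (ofScalars ℝ κ).radius ≤ (ofScalars ℝ (fun n => ((n : ℝ) + 1) * κ (n + 1))).radius := by
  refine ENNReal.le_of_forall_nnreal_lt fun r hr => ?_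
  have h1 : (r : ENNReal) < (ofScalars ℝ κ).derivSeries.radius :=
    lt_of_lt_of_le hr (radius_le_radius_derivSeries _)
  obtain ⟨C, hC0, hC⟩ := (ofScalars ℝ κ).derivSeries.norm_mul_pow_le_of_lt_radius h1
  apply le_radius_of_bound _ C
  intro n
  refine le_trans (mul_le_mul_of_nonneg_right ?_ (pow_nonneg r.2 n)) (hC n)
  rw [ofScalars_norm]
  have he : ((n : ℝ) + 1) * κ (n + 1) = ((ofScalars ℝ κ).derivSeries n fun _ => (1 : ℝ)) 1 := by
    rw [derivSeries_apply_diag, ofScalars_apply_eq]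
    simp [nsmul_eq_mul]
  rw [he]
  calc ‖((ofScalars ℝ κ).derivSeries n fun _ => (1 : ℝ)) 1‖
      ≤ ‖(ofScalars ℝ κ).derivSeries n fun _ => (1 : ℝ)‖ * ‖(1 : ℝ)‖ :=
        ContinuousLinearMap.le_opNorm _ _
    _ ≤ (‖(ofScalars ℝ κ).derivSeries n‖ * ∏ _i : Fin n, ‖(1 : ℝ)‖) * ‖(1 : ℝ)‖ := by
        gcongr
        exact ContinuousMultilinearMap.le_opNorm _ _
    _ = ‖(ofScalars ℝ κ).derivSeries n‖ := by simp

/-- The key coefficient recurrence for the hypergeometric series. -/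
lemma aux_rec (a b c : ℝ) (hc : ∀ k : ℕ, c ≠ -(k : ℝ)) (n : ℕ) :
    ((n : ℝ) + 1) * (c + n) * ordinaryHypergeometricCoefficient a b c (n + 1)
      = (a + n) * (b + n) * ordinaryHypergeometricCoefficient a b c n := by
  have hC : (ascPochhammer ℝ n).eval c ≠ 0 := by
    rw [Ne, ascPochhammer_eval_eq_zero_iff]
    rintro ⟨k, -, hk⟩
    exact hc k (by linarith)
  have hcn : c + (n : ℝ) ≠ 0 := fun h => hc n (by linarith)
  have hfac : ((n : ℕ).factorial : ℝ) ≠ 0 := Nat.cast_ne_zero.2 (Nat.factorial_ne_zero n)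
  have hn1 : ((n : ℝ) + 1) ≠ 0 := by positivity
  unfold ordinaryHypergeometricCoefficient
  rw [ascPochhammer_succ_eval, ascPochhammer_succ_eval, ascPochhammer_succ_eval,
    Nat.factorial_succ]
  push_cast
  field_simp

lemma aux_radius_ge (a b c : ℝ) (hc : ∀ k : ℕ, c ≠ -(k : ℝ)) :
    1 ≤ (ordinaryHypergeometricSeries ℝ a b c).radius := by
  by_cases ha : ∃ k : ℕ, a = -(k : ℝ)
  · obtain ⟨k, hk⟩ := ha
    rw [hk, ordinaryHypergeometric_radius_top_of_neg_nat₁]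
    exact le_top
  by_cases hb : ∃ k : ℕ, b = -(k : ℝ)
  · obtain ⟨k, hk⟩ := hb
    rw [hk, ordinaryHypergeometric_radius_top_of_neg_nat₂]
    exact le_top
  push_neg at ha hb
  rw [ordinaryHypergeometricSeries_radius_eq_one ℝ a b c ?_]
  intro kn
  refine ⟨fun h => ha kn (by linarith), fun h => hb kn (by linarith),
    fun h => hc kn (by linarith)⟩

set_option maxHeartbeats 1000000 in
/-- The hypergeometric differential equation on `(0,1)`. -/
theorem stmt8 (a b c : ℝ) (hc : ∀ k : ℕ, c ≠ -(k : ℝ)) (z : ℝ)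
    (hz : z ∈ Set.Ioo (0 : ℝ) 1) :
    z * (1 - z) * deriv (deriv (hyp2F1 a b c)) z +
      (c - (a + b + 1) * z) * deriv (hyp2F1 a b c) z - a * b * hyp2F1 a b c z = 0 := by
  obtain ⟨hz0', hz1⟩ := hz
  have hz0 : z ≠ 0 := ne_of_gt hz0'
  set κ : ℕ → ℝ := ordinaryHypergeometricCoefficient a b c with hκ
  set p : FormalMultilinearSeries ℝ ℝ ℝ := ofScalars ℝ κ with hp
  -- `hyp2F1 a b c` equals the sum of the power series `p`
  have h_eq : hyp2F1 a b c = p.sum := by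
    funext w
    refine tsum_congr fun n => ?_
    rw [hp, ofScalars_apply_eq, hκ]
    unfold ordinaryHypergeometricCoefficient
    simp only [smul_eq_mul, div_eq_mul_inv]
    ring
  have hrad : 1 ≤ p.radius := aux_radius_ge a b c hc
  have hradpos : 0 < p.radius := lt_of_lt_of_le one_pos hrad
  have hball : HasFPowerSeriesOnBall p.sum p 0 p.radius := p.hasFPowerSeriesOnBall hradpos
  have hnorm : ∀ w : ℝ, |w| < 1 → (‖w‖₊ : ENNReal) < p.radius := by
    intro w hw
    refine lt_of_lt_of_le ?_ hrad
    rw [← ENNReal.coe_one, ENNReal.coe_lt_coe, ← NNReal.coe_lt_coe]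
    simpa [Real.norm_eq_abs] using hw
  have hzn : (‖z‖₊ : ENNReal) < p.radius := hnorm z (by rw [abs_lt]; constructor <;> linarith)
  have hmem : z ∈ Metric.eball (0 : ℝ) p.radius := by
    simpa [Metric.mem_eball, edist_eq_enorm_sub, enorm_eq_nnnorm] using hzn
  -- the function value
  have hF : HasSum (fun n : ℕ => κ n * z ^ n) (p.sum z) := by
    have := hball.hasSum hmem
    rw [zero_add] at this
    simpa only [hp, ofScalars_apply_eq, smul_eq_mul] using this
  -- the first derivative
  have hF1 : HasSum (fun n : ℕ => ((n : ℝ) + 1) * κ (n + 1) * z ^ n) (deriv p.sum z) :=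
    aux_deriv_hasSum hball hz0 hzn
  -- second derivative via the derived series
  set κ' : ℕ → ℝ := fun n => ((n : ℝ) + 1) * κ (n + 1) with hκ'
  set p' : FormalMultilinearSeries ℝ ℝ ℝ := ofScalars ℝ κ' with hp'
  have hrad' : p.radius ≤ p'.radius := aux_radius_le κ
  have hball' : HasFPowerSeriesOnBall p'.sum p' 0 p.radius :=
    (p'.hasFPowerSeriesOnBall (lt_of_lt_of_le hradpos hrad')).mono hradpos hrad'
  -- `deriv p.sum` agrees with `p'.sum` near `z`
  have heq' : deriv p.sum =ᶠ[nhds z] p'.sum := by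
    have hopen : IsOpen {w : ℝ | w ≠ 0 ∧ |w| < 1} := by
      have : {w : ℝ | w ≠ 0 ∧ |w| < 1} = {(0 : ℝ)}ᶜ ∩ Metric.ball 0 1 := by
        ext w; simp [Real.dist_eq]
      rw [this]
      exact (isOpen_compl_singleton).inter Metric.isOpen_ball
    have hzs : z ∈ {w : ℝ | w ≠ 0 ∧ |w| < 1} :=
      ⟨hz0, by rw [abs_lt]; constructor <;> linarith⟩
    refine Filter.eventuallyEq_of_mem (hopen.mem_nhds hzs) fun w hw => ?_
    obtain ⟨hw0, hw1⟩ := hw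
    have h1 := aux_deriv_hasSum hball hw0 (hnorm w hw1)
    have h2 : HasSum (fun n : ℕ => ((n : ℝ) + 1) * κ (n + 1) * w ^ n) (p'.sum w) := by
      have hmemw : w ∈ Metric.eball (0 : ℝ) p.radius := by
        simpa [Metric.mem_eball, edist_eq_enorm_sub, enorm_eq_nnnorm] using hnorm w hw1
      have := hball'.hasSum hmemw
      rw [zero_add] at this
      simpa only [hp', ofScalars_apply_eq, smul_eq_mul, hκ'] using this
    exact h1.unique h2
  have hd2 : deriv (deriv p.sum) z = deriv p'.sum z := heq'.deriv_eq
  have hF2 : HasSum (fun n : ℕ => ((n : ℝ) + 1) * (((n : ℝ) + 1) + 1) * κ (n + 1 + 1) * z ^ n)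
      (deriv (deriv p.sum) z) := by
    rw [hd2]
    have h := aux_deriv_hasSum hball' hz0 hzn
    have hfe : (fun n : ℕ => ((n : ℝ) + 1) * κ' (n + 1) * z ^ n)
        = fun n : ℕ => ((n : ℝ) + 1) * (((n : ℝ) + 1) + 1) * κ (n + 1 + 1) * z ^ n := by
      funext n
      rw [hκ']
      push_cast
      ring
    rw [hfe] at h
    exact h
  -- shifted series
  have S1 : HasSum (fun n : ℕ => (n : ℝ) * κ n * z ^ n) (z * deriv p.sum z) := by
    have h := hF1.mul_left z
    have h' : HasSum (fun n : ℕ => (fun m : ℕ => (m : ℝ) * κ m * z ^ m) (n + 1))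
        (z * deriv p.sum z) := by
      have hfe : (fun n : ℕ => (fun m : ℕ => (m : ℝ) * κ m * z ^ m) (n + 1))
          = fun n : ℕ => z * (((n : ℝ) + 1) * κ (n + 1) * z ^ n) := by
        funext n
        push_cast
        ring
      rw [hfe]
      exact h
    have := (hasSum_nat_add_iff (f := fun m : ℕ => (m : ℝ) * κ m * z ^ m) 1).1 h'
    simpa using this
  have S3 : HasSum (fun n : ℕ => (n : ℝ) * ((n : ℝ) + 1) * κ (n + 1) * z ^ n)
      (z * deriv (deriv p.sum) z) := by
    have h := hF2.mul_left z
    have h' : HasSum (fun n : ℕ => (fun m : ℕ => (m : ℝ) * ((m : ℝ) + 1) * κ (m + 1) * z ^ m) (n + 1))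
        (z * deriv (deriv p.sum) z) := by
      have hfe : (fun n : ℕ => (fun m : ℕ => (m : ℝ) * ((m : ℝ) + 1) * κ (m + 1) * z ^ m) (n + 1))
          = fun n : ℕ => z * (((n : ℝ) + 1) * (((n : ℝ) + 1) + 1) * κ (n + 1 + 1) * z ^ n) := by
        funext n
        push_cast
        ring
      rw [hfe]
      exact h
    have := (hasSum_nat_add_iff
      (f := fun m : ℕ => (m : ℝ) * ((m : ℝ) + 1) * κ (m + 1) * z ^ m) 1).1 h'
    simpa using this
  have S2 : HasSum (fun n : ℕ => ((n : ℝ) - 1) * (n : ℝ) * κ n * z ^ n)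
      (z ^ 2 * deriv (deriv p.sum) z) := by
    have h := hF2.mul_left (z ^ 2)
    have h' : HasSum (fun n : ℕ => (fun m : ℕ => ((m : ℝ) - 1) * (m : ℝ) * κ m * z ^ m) (n + 2))
        (z ^ 2 * deriv (deriv p.sum) z) := by
      have hfe : (fun n : ℕ => (fun m : ℕ => ((m : ℝ) - 1) * (m : ℝ) * κ m * z ^ m) (n + 2))
          = fun n : ℕ => z ^ 2 * (((n : ℝ) + 1) * (((n : ℝ) + 1) + 1) * κ (n + 1 + 1) * z ^ n) := by
        funext n
        push_cast
        ring
      rw [hfe]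
      exact h
    have := (hasSum_nat_add_iff
      (f := fun m : ℕ => ((m : ℝ) - 1) * (m : ℝ) * κ m * z ^ m) 2).1 h'
    simpa [Finset.sum_range_succ] using this
  -- combine everything
  have final : HasSum (fun n : ℕ =>
      ((n : ℝ) * ((n : ℝ) + 1) * κ (n + 1) * z ^ n - ((n : ℝ) - 1) * (n : ℝ) * κ n * z ^ n
        + c * (((n : ℝ) + 1) * κ (n + 1) * z ^ n) - (a + b + 1) * ((n : ℝ) * κ n * z ^ n)
        - a * b * (κ n * z ^ n)))
      ((z * deriv (deriv p.sum) z - z ^ 2 * deriv (deriv p.sum) z + c * deriv p.sum z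
        - (a + b + 1) * (z * deriv p.sum z)) - a * b * p.sum z) :=
    (((S3.sub S2).add (hF1.mul_left c)).sub (S1.mul_left (a + b + 1))).sub (hF.mul_left (a * b))
  have hzero : (fun n : ℕ =>
      ((n : ℝ) * ((n : ℝ) + 1) * κ (n + 1) * z ^ n - ((n : ℝ) - 1) * (n : ℝ) * κ n * z ^ n
        + c * (((n : ℝ) + 1) * κ (n + 1) * z ^ n) - (a + b + 1) * ((n : ℝ) * κ n * z ^ n)
        - a * b * (κ n * z ^ n))) = fun _ : ℕ => (0 : ℝ) := by
    funext n
    have key := aux_rec a b c hc n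
    rw [hκ] at *
    linear_combination (z : ℝ) ^ n * key
  rw [hzero] at final
  have hL : (z * deriv (deriv p.sum) z - z ^ 2 * deriv (deriv p.sum) z + c * deriv p.sum z
      - (a + b + 1) * (z * deriv p.sum z)) - a * b * p.sum z = 0 := final.unique hasSum_zero
  rw [h_eq]
  linear_combination hL
end

section
/- Let n ≥ 2, 0 < σ < 1, and F(s) = ₂F₁((n-2σ)/4, (n-2σ)/4; n/2; s). Then lim_{s→1⁻} s^{n/2} (1-s)^{1-σ} F(s) F'(s) = Γ(n/2)² Γ(σ) Γ(1-σ) / ( Γ((n-2σ)/4)² Γ((n+2σ)/4)² ). -/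
open Real MeasureTheory Set Filter Metric
open scoped Topology NNReal

namespace Stmt10

noncomputable def P (k : ℕ) (x : ℝ) : ℝ := (ascPochhammer ℝ k).eval x

lemma P_zero (x : ℝ) : P 0 x = 1 := by simp [P]

lemma P_succ (k : ℕ) (x : ℝ) : P (k+1) x = P k x * (x + k) := by
  simpa [P] using ascPochhammer_succ_eval k x

lemma P_pos {x : ℝ} (hx : 0 < x) (k : ℕ) : 0 < P k x := ascPochhammer_pos k x hx

lemma Gamma_P {x : ℝ} (hx : 0 < x) (k : ℕ) :
    Real.Gamma (x + k) = Real.Gamma x * P k x := by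
  induction k with
  | zero => simp [P_zero]
  | succ k ih =>
    have hxk : (0:ℝ) < x + k := by positivity
    have e : (x + (k+1:ℕ) : ℝ) = (x + k) + 1 := by push_cast; ring
    rw [e, Real.Gamma_add_one hxk.ne', ih, P_succ]
    ring

/-- binomial coefficient -/
noncomputable def d (a : ℝ) (k : ℕ) : ℝ := P k a / (Nat.factorial k : ℝ)

lemma d_pos {a : ℝ} (ha : 0 < a) (k : ℕ) : 0 < d a k :=
  div_pos (P_pos ha k) (by positivity)

lemma d_zero (a : ℝ) : d a 0 = 1 := by simp [d, P_zero]

lemma d_succ (a : ℝ) (k : ℕ) : d a (k+1) * (k+1) = d a k * (a + k) := by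
  have h1 : (Nat.factorial (k+1) : ℝ) = (k+1) * (Nat.factorial k) := by
    push_cast [Nat.factorial_succ]; ring
  have h2 : (Nat.factorial k : ℝ) ≠ 0 := by positivity
  have h3 : ((k:ℝ)+1) ≠ 0 := by positivity
  rw [d, d, P_succ, h1]
  field_simp

lemma tendsto_ratio (A : ℝ) :
    Tendsto (fun k : ℕ => (A + k) / (k + 1)) atTop (𝓝 1) := by
  have h : ∀ k : ℕ, (A + k) / (k + 1) = (A - 1) / ((k:ℝ) + 1) + 1 := by
    intro k
    have : ((k:ℝ) + 1) ≠ 0 := by positivity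
    field_simp
    ring
  simp_rw [h]
  have h0 : Tendsto (fun k : ℕ => (A - 1) / ((k:ℝ) + 1)) atTop (𝓝 0) := by
    apply Tendsto.div_atTop (tendsto_const_nhds)
    exact tendsto_atTop_add_const_right atTop 1 tendsto_natCast_atTop_atTop
  simpa using h0.add tendsto_const_nhds

lemma summable_of_ratio_pos {f : ℕ → ℝ} (hf : ∀ k, 0 < f k) {L : ℝ} (hL : L < 1)
    (h : Tendsto (fun k => f (k+1) / f k) atTop (𝓝 L)) : Summable f := by
  apply summable_of_ratio_test_tendsto_lt_one hL
    (Eventually.of_forall fun k => (hf k).ne')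
  convert h using 2 with k
  rw [Real.norm_eq_abs, Real.norm_eq_abs, abs_of_pos (hf _), abs_of_pos (hf _)]

/-- summability of the binomial series -/
lemma summable_d_pow {a : ℝ} (ha : 0 < a) {x : ℝ} (hx0 : 0 < x) (hx : x < 1) :
    Summable (fun k => d a k * x ^ k) := by
  apply summable_of_ratio_pos (fun k => mul_pos (d_pos ha k) (pow_pos hx0 k)) hx
  have key : ∀ k : ℕ, d a (k+1) * x ^ (k+1) / (d a k * x ^ k)
      = ((a + k) / (k + 1)) * x := by
    intro k
    have h1 : d a (k+1) = d a k * (a + k) / (k+1) := by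
      have := d_succ a k
      field_simp at this ⊢
      linarith [this]
    rw [h1, pow_succ]
    have h2 : d a k ≠ 0 := (d_pos ha k).ne'
    have h3 : x ^ k ≠ 0 := by positivity
    have h4 : ((k:ℝ)+1) ≠ 0 := by positivity
    field_simp
  simp_rw [key]
  simpa using (tendsto_ratio a).mul_const x

/-- summability of the derived binomial series bound -/
lemma summable_deriv_bound {a : ℝ} (ha : 0 < a) {r : ℝ} (hr0 : 0 < r) (hr : r < 1) :
    Summable (fun k => d a k * ((k : ℝ) * r ^ (k-1))) := by
  apply summable_of_ratio_test_tendsto_lt_one hr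
  · filter_upwards [eventually_ge_atTop 1] with k hk
    have hk' : (0:ℝ) < k := by exact_mod_cast hk
    have : (0:ℝ) < d a k * ((k : ℝ) * r ^ (k-1)) := mul_pos (d_pos ha k) (mul_pos hk' (pow_pos hr0 _))
    exact this.ne'
  · have tends : Tendsto (fun k : ℕ => ((a + k) / (k:ℝ)) * r) atTop (𝓝 r) := by
      have h1 : Tendsto (fun k : ℕ => (a + (k:ℝ)) / k) atTop (𝓝 1) := by
        have h : ∀ᶠ k : ℕ in atTop, a / (k:ℝ) + 1 = (a + (k:ℝ)) / k := by
          filter_upwards [eventually_ge_atTop 1] with k hk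
          have : ((k:ℝ)) ≠ 0 := by
            have : (0:ℝ) < k := by exact_mod_cast hk
            exact this.ne'
          field_simp
        apply Tendsto.congr' h
        have h0 : Tendsto (fun k : ℕ => a / (k:ℝ)) atTop (𝓝 0) :=
          Tendsto.div_atTop tendsto_const_nhds tendsto_natCast_atTop_atTop
        simpa using h0.add tendsto_const_nhds
      simpa using h1.mul_const r
    refine Tendsto.congr' ?_ tends
    filter_upwards [eventually_ge_atTop 1] with k hk
    simp only [Nat.add_sub_cancel]
    obtain ⟨m, rfl⟩ := Nat.exists_eq_add_of_le hk
    have hk' : (0:ℝ) < 1 + m := by positivity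
    have e1 : (1 + m) - 1 = m := by omega
    have hd1 := d_pos ha (1+m)
    have hd2 := d_pos ha (1+m+1)
    rw [e1]
    rw [Real.norm_eq_abs, Real.norm_eq_abs, abs_of_pos (by positivity),
      abs_of_pos (mul_pos hd1 (by positivity))]
    have h1 : d a (1+m+1) = d a (1+m) * (a + (1+m)) / ((1+m)+1) := by
      have := d_succ a (1+m)
      push_cast at this ⊢
      field_simp at this ⊢
      linarith [this]
    rw [h1]
    have h2 : r ^ (1+m) = r ^ m * r := by
      rw [pow_add]; ring
    rw [h2]
    have h4 : ((1:ℝ)+m+1) ≠ 0 := by positivity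
    have h5 : d a (1+m) ≠ 0 := hd1.ne'
    have h6 : r ^ m ≠ 0 := by positivity
    push_cast
    field_simp



lemma deriv_term_bound {a : ℝ} (ha : 0 < a) {r y : ℝ} (hy : |y| ≤ r) (k : ℕ) :
    ‖d a k * ((k:ℝ) * y ^ (k-1))‖ ≤ d a k * ((k:ℝ) * r ^ (k-1)) := by
  have hk0 : (0:ℝ) ≤ (k:ℝ) := by positivity
  rw [Real.norm_eq_abs, abs_mul, abs_mul, abs_pow, abs_of_pos (d_pos ha k),
    abs_of_nonneg hk0]
  have hp : |y| ^ (k-1) ≤ r ^ (k-1) := pow_le_pow_left₀ (abs_nonneg y) hy _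
  exact mul_le_mul_of_nonneg_left (mul_le_mul_of_nonneg_left hp hk0) (d_pos ha k).le

/-- Key: term-by-term derivative info on a ball. -/
lemma hasDerivAt_binomial {a : ℝ} (ha : 0 < a) {r : ℝ} (hr0 : 0 < r) (hr : r < 1)
    {y : ℝ} (hy : y ∈ ball (0:ℝ) r) :
    HasDerivAt (fun z => ∑' k, d a k * z ^ k)
      (∑' k, d a k * ((k:ℝ) * y ^ (k-1))) y := by
  apply hasDerivAt_tsum_of_isPreconnected (summable_deriv_bound ha hr0 hr)
    isOpen_ball (convex_ball (0:ℝ) r).isPreconnected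
    (g := fun k z => d a k * z ^ k) (g' := fun k z => d a k * ((k:ℝ) * z ^ (k-1)))
    (fun k z _ => (hasDerivAt_pow k z).const_mul (d a k))
    (fun k z hz => deriv_term_bound ha (by simpa [Real.norm_eq_abs] using (mem_ball_zero_iff.1 hz).le) k)
    (mem_ball_self hr0) ?hsum0 hy
  case hsum0 =>
    apply summable_of_ne_finset_zero (s := {0})
    intro k hk
    have : k ≠ 0 := by simpa using hk
    simp [zero_pow this]

lemma summable_binomial_ball {a : ℝ} (ha : 0 < a) {r : ℝ} (hr0 : 0 < r) (hr : r < 1)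
    {y : ℝ} (hy : y ∈ ball (0:ℝ) r) : Summable (fun k => d a k * y ^ k) := by
  apply summable_of_summable_hasDerivAt_of_isPreconnected (summable_deriv_bound ha hr0 hr)
    isOpen_ball (convex_ball (0:ℝ) r).isPreconnected
    (g := fun k z => d a k * z ^ k) (g' := fun k z => d a k * ((k:ℝ) * z ^ (k-1)))
    (fun k z _ => (hasDerivAt_pow k z).const_mul (d a k))
    (fun k z hz => deriv_term_bound ha (by simpa [Real.norm_eq_abs] using (mem_ball_zero_iff.1 hz).le) k)
    (mem_ball_self hr0) ?hsum0 hy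
  case hsum0 =>
    apply summable_of_ne_finset_zero (s := {0})
    intro k hk
    have : k ≠ 0 := by simpa using hk
    simp [zero_pow this]

/-- the ODE relation (1-y) g'(y) = a g(y). -/
lemma binomial_ode {a : ℝ} (ha : 0 < a) {r : ℝ} (hr0 : 0 < r) (hr : r < 1)
    {y : ℝ} (hy : y ∈ ball (0:ℝ) r) :
    (1 - y) * (∑' k, d a k * ((k:ℝ) * y ^ (k-1))) = a * (∑' k, d a k * y ^ k) := by
  set T := ∑' k, d a k * ((k:ℝ) * y ^ (k-1)) with hT
  set g := ∑' k, d a k * y ^ k with hg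
  have hyr : |y| < r := by simpa [Real.norm_eq_abs] using mem_ball_zero_iff.1 hy
  have hsumT : Summable (fun k => d a k * ((k:ℝ) * y ^ (k-1))) :=
    Summable.of_norm_bounded (summable_deriv_bound ha hr0 hr)
      (deriv_term_bound ha hyr.le)
  have hG : HasSum (fun k => d a k * ((k:ℝ) * y ^ (k-1))) T := hsumT.hasSum
  have hgS : HasSum (fun k => d a k * y ^ k) g :=
    (summable_binomial_ball ha hr0 hr hy).hasSum
  -- shifted sum
  have hshift0 := (hasSum_nat_add_iff'
      (f := fun k => d a k * ((k:ℝ) * y ^ (k-1))) 1).2 hG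
  simp only [Finset.range_one, Finset.sum_singleton, Nat.cast_zero, zero_mul,
    mul_zero, sub_zero] at hshift0
  have hsum2 : HasSum
      (fun k : ℕ => a * (d a k * y ^ k) + y * (d a k * ((k:ℝ) * y ^ (k-1))))
      (a * g + y * T) := (hgS.mul_left a).add (hG.mul_left y)
  have hfun : (fun k : ℕ => d a (k+1) * ((((k:ℕ)+1 : ℕ):ℝ) * y ^ ((k+1)-1)))
      = fun k : ℕ => a * (d a k * y ^ k) + y * (d a k * ((k:ℝ) * y ^ (k-1))) := by
    funext k
    have h1 : y * ((k:ℝ) * y ^ (k-1)) = (k:ℝ) * y ^ k := by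
      cases k with
      | zero => simp
      | succ m =>
        have : (m+1) - 1 = m := by omega
        rw [this]
        push_cast
        rw [pow_succ]
        ring
    have h2 : d a (k+1) * ((k:ℝ)+1) = d a k * (a + k) := d_succ a k
    have e1 : (k+1) - 1 = k := by omega
    rw [e1]
    push_cast
    calc d a (k+1) * (((k:ℝ)+1) * y ^ k) = (d a (k+1) * ((k:ℝ)+1)) * y ^ k := by ring
      _ = (d a k * (a + k)) * y ^ k := by rw [h2]
      _ = a * (d a k * y ^ k) + (k:ℝ) * y ^ k * d a k := by ring
      _ = a * (d a k * y ^ k) + y * (d a k * ((k:ℝ) * y ^ (k-1))) := by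
          rw [← h1]; ring
  rw [hfun] at hshift0
  have : T = a * g + y * T := hshift0.unique hsum2
  linarith [this]

/-- The binomial series. -/
lemma hasSum_binomial {a : ℝ} (ha : 0 < a) {x : ℝ} (hx0 : 0 ≤ x) (hx : x < 1) :
    HasSum (fun k => d a k * x ^ k) ((1 - x) ^ (-a)) := by
  rcases eq_or_lt_of_le hx0 with h0 | h0
  · rw [← h0]
    have : ((1:ℝ) - 0) ^ (-a) = 1 := by norm_num
    rw [this]
    convert hasSum_ite_eq (0:ℕ) (1:ℝ) using 1
    funext k
    cases k with
    | zero => simp [d_zero]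
    | succ m => simp
  -- main case 0 < x < 1
  set r := (x + 1) / 2 with hrdef
  have hr0 : 0 < r := by positivity
  have hr1 : r < 1 := by rw [hrdef]; linarith
  have hxr : x < r := by rw [hrdef]; linarith
  have hmem : ∀ z ∈ Icc (0:ℝ) x, z ∈ ball (0:ℝ) r := by
    intro z hz
    rw [mem_ball_zero_iff, Real.norm_eq_abs, abs_of_nonneg hz.1]
    linarith [hz.2]
  set h : ℝ → ℝ := fun z => (∑' k, d a k * z ^ k) * (1 - z) ^ a with hh
  have hderiv : ∀ z ∈ Icc (0:ℝ) x, HasDerivAt h 0 z := by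
    intro z hz
    have hzball := hmem z hz
    have hz1 : z < 1 := by
      have := mem_ball_zero_iff.1 hzball
      rw [Real.norm_eq_abs] at this
      calc z ≤ |z| := le_abs_self z
        _ < r := this
        _ < 1 := hr1
    have h1z : (0:ℝ) < 1 - z := by linarith
    have hD1 : HasDerivAt (fun w => ∑' k, d a k * w ^ k)
        (∑' k, d a k * ((k:ℝ) * z ^ (k-1))) z := hasDerivAt_binomial ha hr0 hr1 hzball
    have hD2 : HasDerivAt (fun w => ((1:ℝ) - w) ^ a) (-1 * a * (1 - z) ^ (a - 1)) z := by
      exact (((hasDerivAt_id z).const_sub 1)).rpow_const (Or.inl h1z.ne')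
    have hmul := hD1.mul hD2
    refine hmul.congr_deriv ?_
    symm
    have hode := binomial_ode ha hr0 hr1 hzball
    have hsplit : (1 - z) ^ a = (1 - z) ^ (a - 1) * (1 - z) := by
      rw [← Real.rpow_add_one h1z.ne' (a-1)]
      norm_num
    rw [hsplit]
    linear_combination (-(1:ℝ)) * (1 - z) ^ (a - 1) * hode
  have hcont : ContinuousOn h (Icc (0:ℝ) x) :=
    fun z hz => ((hderiv z hz).continuousAt).continuousWithinAt
  have hconst := constant_of_has_deriv_right_zero hcont
    (fun z hz => ((hderiv z (Ico_subset_Icc_self hz)).hasDerivWithinAt))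
    x (right_mem_Icc.2 hx0)
  have hzero : h 0 = 1 := by
    rw [hh]
    simp only
    have : (∑' k, d a k * (0:ℝ) ^ k) = 1 := by
      rw [tsum_eq_single 0]
      · simp [d_zero]
      · intro k hk
        simp [zero_pow hk]
    rw [this]
    norm_num
  have hx1 : (0:ℝ) < 1 - x := by linarith
  have hval : (∑' k, d a k * x ^ k) = (1 - x) ^ (-a) := by
    have h1 : (∑' k, d a k * x ^ k) * (1 - x) ^ a = 1 := hconst.trans hzero
    have hpow : (0:ℝ) < (1 - x) ^ a := Real.rpow_pos_of_pos hx1 a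
    rw [Real.rpow_neg hx1.le, inv_eq_one_div, eq_div_iff hpow.ne']
    exact h1
  have := (summable_binomial_ball ha hr0 hr1 (hmem x (right_mem_Icc.2 hx0))).hasSum
  rwa [hval] at this


/-! ### Real Beta integral -/

lemma beta_integrableOn {p q : ℝ} (hp : 0 < p) (hq : 0 < q) :
    IntegrableOn (fun t : ℝ => t ^ (p-1) * (1-t) ^ (q-1)) (Ioo (0:ℝ) 1) := by
  have hC := (Complex.betaIntegral_convergent (u := (p:ℂ)) (v := (q:ℂ))
    (by simpa using hp) (by simpa using hq))
  have hC' : IntegrableOn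
      (fun t : ℝ => (t:ℂ) ^ ((p:ℂ)-1) * (1-(t:ℝ):ℂ) ^ ((q:ℂ)-1)) (Ioo (0:ℝ) 1) := by
    have := hC.1
    rw [intervalIntegrable_iff_integrableOn_Ioo_of_le zero_le_one] at hC
    exact hC
  have hn : IntegrableOn
      (fun t : ℝ => ‖(t:ℂ) ^ ((p:ℂ)-1) * (1-(t:ℝ):ℂ) ^ ((q:ℂ)-1)‖) (Ioo (0:ℝ) 1) := hC'.norm
  apply MeasureTheory.IntegrableOn.congr_fun hn ?_ measurableSet_Ioo
  intro t ht
  simp only [norm_mul]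
  have h1 : ((1:ℂ) - (t:ℝ)) = ((1 - t : ℝ) : ℂ) := by push_cast; ring
  rw [h1]
  rw [Complex.norm_cpow_eq_rpow_re_of_pos ht.1, Complex.norm_cpow_eq_rpow_re_of_pos (by linarith [ht.2])]
  norm_num

lemma beta_integral_eval {p q : ℝ} (hp : 0 < p) (hq : 0 < q) :
    ∫ t in Ioo (0:ℝ) 1, t ^ (p-1) * (1-t) ^ (q-1)
      = Real.Gamma p * Real.Gamma q / Real.Gamma (p+q) := by
  have hbeta : Complex.betaIntegral p q
      = (Real.Gamma p * Real.Gamma q / Real.Gamma (p+q) : ℝ) := by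
    have h := Complex.Gamma_mul_Gamma_eq_betaIntegral
      (s := (p:ℂ)) (t := (q:ℂ)) (by simpa using hp) (by simpa using hq)
    have hne : Complex.Gamma ((p:ℂ)+(q:ℂ)) ≠ 0 := by
      have : ((p:ℂ)+(q:ℂ)) = ((p+q:ℝ):ℂ) := by push_cast; ring
      rw [this, Complex.Gamma_ofReal]
      simpa using (Real.Gamma_pos_of_pos (by linarith)).ne'
    have h2 : Complex.betaIntegral p q
        = Complex.Gamma p * Complex.Gamma q / Complex.Gamma ((p:ℂ)+(q:ℂ)) := by
      rw [eq_div_iff hne]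
      linear_combination -h
    rw [h2]
    have e1 : ((p:ℂ)+(q:ℂ)) = ((p+q:ℝ):ℂ) := by push_cast; ring
    rw [e1, Complex.Gamma_ofReal, Complex.Gamma_ofReal, Complex.Gamma_ofReal]
    push_cast
    ring
  -- relate real integral to complex beta integral
  have hio : ∫ t in Ioo (0:ℝ) 1, t ^ (p-1) * (1-t) ^ (q-1)
      = ∫ t in (0:ℝ)..1, t ^ (p-1) * (1-t) ^ (q-1) := by
    rw [intervalIntegral.integral_of_le zero_le_one,
      MeasureTheory.integral_Ioc_eq_integral_Ioo]
  have hcomplex : ((∫ t in (0:ℝ)..1, t ^ (p-1) * (1-t) ^ (q-1) : ℝ) : ℂ)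
      = Complex.betaIntegral p q := by
    rw [← intervalIntegral.integral_ofReal]
    rw [Complex.betaIntegral]
    apply intervalIntegral.integral_congr_ae
    have : ∀ᵐ t : ℝ, t ∈ Ioo (0:ℝ) 1 →
        ((t ^ (p-1) * (1-t) ^ (q-1) : ℝ) : ℂ)
          = (t:ℂ) ^ ((p:ℂ)-1) * (1-(t:ℝ):ℂ) ^ ((q:ℂ)-1) := by
      filter_upwards with t ht
      have h1 : ((1:ℂ) - (t:ℝ)) = ((1 - t : ℝ) : ℂ) := by push_cast; ring
      have e1 : ((p:ℂ)-1) = ((p-1:ℝ):ℂ) := by push_cast; ring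
      have e2 : ((q:ℂ)-1) = ((q-1:ℝ):ℂ) := by push_cast; ring
      rw [h1, e1, e2, ← Complex.ofReal_cpow ht.1.le,
        ← Complex.ofReal_cpow (by linarith [ht.2] : (0:ℝ) ≤ 1 - t),
        ← Complex.ofReal_mul]
    have hsub : ∀ᵐ t : ℝ, t ∈ Set.uIoc (0:ℝ) 1 →
        ((t ^ (p-1) * (1-t) ^ (q-1) : ℝ) : ℂ)
          = (t:ℂ) ^ ((p:ℂ)-1) * (1-(t:ℝ):ℂ) ^ ((q:ℂ)-1) := by
      filter_upwards [this, measure_eq_zero_iff_ae_notMem.1 (Real.volume_singleton (a := 1))] with t h1 h2 ht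
      apply h1
      rw [Set.uIoc_of_le zero_le_one] at ht
      constructor
      · exact ht.1
      · rcases lt_or_eq_of_le ht.2 with h | h
        · exact h
        · exact absurd (by simpa using h) h2
    exact hsub
  have := congrArg Complex.re hcomplex
  rw [Complex.ofReal_re] at this
  rw [hio, this, hbeta, Complex.ofReal_re]


/-! ### summability of the 2F1 series -/

lemma tendsto_ratio_gen (A : ℝ) {B : ℝ} (hB : 0 < B) :
    Tendsto (fun k : ℕ => (A + k) / (B + k)) atTop (𝓝 1) := by
  have h : ∀ k : ℕ, (A + k) / (B + k) = (A - B) / (B + (k:ℝ)) + 1 := by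
    intro k
    have : (B + (k:ℝ)) ≠ 0 := by positivity
    field_simp
    ring
  simp_rw [h]
  have h0 : Tendsto (fun k : ℕ => (A - B) / (B + (k:ℝ))) atTop (𝓝 0) := by
    apply Tendsto.div_atTop (tendsto_const_nhds)
    exact tendsto_atTop_add_const_left atTop B tendsto_natCast_atTop_atTop
  simpa using h0.add tendsto_const_nhds

/-- the coefficient of the ₂F₁ series (with `b = a`) -/
noncomputable def r (a c : ℝ) (k : ℕ) : ℝ :=
  P k a * P k a / P k c / (Nat.factorial k : ℝ)

lemma r_pos {a c : ℝ} (ha : 0 < a) (hc : 0 < c) (k : ℕ) : 0 < r a c k := by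
  have h1 := P_pos ha k
  have h2 := P_pos hc k
  have h3 : (0:ℝ) < (Nat.factorial k : ℝ) := by positivity
  exact div_pos (div_pos (mul_pos h1 h1) h2) h3

lemma hyp2F1_eq_tsum (a c z : ℝ) : hyp2F1 a a c z = ∑' k, r a c k * z ^ k := by
  unfold hyp2F1 r P
  congr 1
  funext k
  ring

lemma summable_r_mul_pow {a c : ℝ} (ha : 0 < a) (hc : 0 < c) {z : ℝ}
    (hz0 : 0 < z) (hz1 : z < 1) : Summable (fun k => r a c k * z ^ k) := by
  apply summable_of_ratio_pos
    (fun k => mul_pos (r_pos ha hc k) (pow_pos hz0 k)) hz1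
  have key : ∀ k : ℕ, r a c (k+1) * z ^ (k+1) / (r a c k * z ^ k)
      = (((a + k) / (c + k)) * ((a + k) / ((k:ℝ) + 1))) * z := by
    intro k
    have hPa := P_pos ha k
    have hPc := P_pos hc k
    have hfac : (0:ℝ) < (Nat.factorial k : ℝ) := by positivity
    have hck : (0:ℝ) < c + k := by positivity
    have hk1 : (0:ℝ) < (k:ℝ) + 1 := by positivity
    have hzk : (0:ℝ) < z ^ k := pow_pos hz0 k
    rw [r, r, P_succ, P_succ]
    have hfacs : (Nat.factorial (k+1) : ℝ) = ((k:ℝ)+1) * (Nat.factorial k : ℝ) := by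
      push_cast [Nat.factorial_succ]; ring
    rw [hfacs, pow_succ]
    field_simp
  simp_rw [key]
  have h1 : Tendsto (fun k : ℕ => ((a + k) / (c + k)) * ((a + k) / ((k:ℝ) + 1)))
      atTop (𝓝 1) := by
    have := (tendsto_ratio_gen a hc).mul (tendsto_ratio a)
    simpa using this
  simpa using h1.mul_const z

/-! ### the Euler integral representation -/

lemma rpow_aux {t : ℝ} (ht : 0 < t) (x : ℝ) (k : ℕ) :
    t ^ (x + k) = t ^ x * t ^ k := by
  rw [← Real.rpow_natCast t k, ← Real.rpow_add ht]

lemma contOn_two (x y : ℝ) :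
    ContinuousOn (fun t : ℝ => t ^ x * (1-t) ^ y) (Ioo (0:ℝ) 1) := by
  intro t ht
  apply ContinuousAt.continuousWithinAt
  have h1 : ContinuousAt (fun t : ℝ => t ^ x) t :=
    Real.continuousAt_rpow_const t x (Or.inl ht.1.ne')
  have h2 : ContinuousAt (fun t : ℝ => (1-t) ^ y) t := by
    apply ContinuousAt.rpow_const
    · exact (continuous_const.sub continuous_id).continuousAt
    · left
      have hne : (1:ℝ) - t ≠ 0 := by
        intro h
        have : t = 1 := by linarith
        linarith [ht.2, this]
      simpa using hne
  exact h1.mul h2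

lemma contOn_three {w : ℝ} (hw0 : 0 ≤ w) (hw1 : w < 1) (x y s : ℝ) :
    ContinuousOn (fun t : ℝ => t ^ x * (1-t) ^ y * (1 - w*t) ^ s) (Ioo (0:ℝ) 1) := by
  apply (contOn_two x y).mul
  intro t ht
  apply ContinuousAt.continuousWithinAt
  apply ContinuousAt.rpow_const
  · exact (continuous_const.sub (continuous_const.mul continuous_id)).continuousAt
  · left
    have hlt : w * t < 1 := by nlinarith [ht.1, ht.2]
    have hne : (1:ℝ) - w * t ≠ 0 := by intro h; nlinarith
    simpa using hne

lemma int_rep {a c : ℝ} (ha : 0 < a) (hac : a < c) {z : ℝ} (hz0 : 0 < z) (hz1 : z < 1) :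
    hyp2F1 a a c z = (Real.Gamma c / (Real.Gamma a * Real.Gamma (c-a))) *
      ∫ t in Ioo (0:ℝ) 1, t ^ (a-1) * (1-t) ^ (c-a-1) * (1-z*t) ^ (-a) := by
  have hca : 0 < c - a := by linarith
  have hc : 0 < c := by linarith
  set f : ℕ → ℝ → ℝ := fun k t => (d a k * z ^ k) * (t ^ (a + k - 1) * (1-t) ^ (c-a-1))
    with hf
  -- measurability
  have hmeas : ∀ k : ℕ, AEStronglyMeasurable (f k) (volume.restrict (Ioo (0:ℝ) 1)) := by
    intro k
    exact (continuousOn_const.mul (contOn_two (a + k - 1) (c-a-1))).aestronglyMeasurable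
      measurableSet_Ioo
  -- integrability of each term
  have hint : ∀ k : ℕ, IntegrableOn (f k) (Ioo (0:ℝ) 1) := by
    intro k
    apply Integrable.const_mul
    have := beta_integrableOn (p := a + k) (q := c - a) (by positivity) hca
    exact this
  -- nonnegativity
  have hnonneg : ∀ k : ℕ, ∀ t ∈ Ioo (0:ℝ) 1, 0 ≤ f k t := by
    intro k t ht
    have h1 : 0 ≤ t := ht.1.le
    have h2 : (0:ℝ) ≤ 1 - t := by linarith [ht.2]
    have := (d_pos ha k).le
    positivity
  -- value of each term integral
  have hval : ∀ k : ℕ, ∫ t in Ioo (0:ℝ) 1, f k t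
      = (Real.Gamma a * Real.Gamma (c-a) / Real.Gamma c) * (r a c k * z ^ k) := by
    intro k
    rw [MeasureTheory.integral_const_mul]
    have e1 : ∀ t : ℝ, t ^ (a + k - 1) * (1-t) ^ (c-a-1)
        = t ^ ((a+k) - 1) * (1-t) ^ ((c-a) - 1) := by intro t; norm_num
    have hb := beta_integral_eval (p := a + k) (q := c - a) (by positivity) hca
    have e2 : a + (k:ℝ) + (c - a) = c + k := by ring
    rw [e2] at hb
    calc (d a k * z ^ k) * ∫ t in Ioo (0:ℝ) 1, t ^ (a + ↑k - 1) * (1-t) ^ (c-a-1)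
        = (d a k * z ^ k) * (Real.Gamma (a+k) * Real.Gamma (c-a) / Real.Gamma (c+k)) := by
          rw [hb]
      _ = (Real.Gamma a * Real.Gamma (c-a) / Real.Gamma c) * (r a c k * z ^ k) := by
          rw [Gamma_P ha k, Gamma_P hc k, d, r]
          have h1 : Real.Gamma c ≠ 0 := (Real.Gamma_pos_of_pos hc).ne'
          have h2 : P k c ≠ 0 := (P_pos hc k).ne'
          have h3 : (Nat.factorial k : ℝ) ≠ 0 := by positivity
          field_simp
  -- summability of the integrals
  have hsumr : Summable (fun k => r a c k * z ^ k) := summable_r_mul_pow ha hc hz0 hz1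
  have hsumint : Summable (fun k => ∫ t in Ioo (0:ℝ) 1, f k t) := by
    simp_rw [hval]
    exact hsumr.mul_left _
  -- interchange
  have hswap : ∫ t in Ioo (0:ℝ) 1, ∑' k, f k t = ∑' k, ∫ t in Ioo (0:ℝ) 1, f k t := by
    apply MeasureTheory.integral_tsum hmeas
    have hae : ∀ k : ℕ, ∫⁻ t in Ioo (0:ℝ) 1, ‖f k t‖ₑ
        = ENNReal.ofReal (∫ t in Ioo (0:ℝ) 1, f k t) := by
      intro k
      have h1 : ∫⁻ t in Ioo (0:ℝ) 1, ‖f k t‖ₑ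
          = ∫⁻ t in Ioo (0:ℝ) 1, ENNReal.ofReal (f k t) := by
        apply MeasureTheory.lintegral_congr_ae
        exact (ae_restrict_iff' measurableSet_Ioo).2 (Eventually.of_forall
          (fun t ht => Real.enorm_eq_ofReal (hnonneg k t ht)))
      rw [h1, ← MeasureTheory.ofReal_integral_eq_lintegral_ofReal (hint k)
        ((ae_restrict_iff' measurableSet_Ioo).2 (Eventually.of_forall (hnonneg k)))]
    simp_rw [hae]
    rw [← ENNReal.ofReal_tsum_of_nonneg ?_ hsumint]
    · exact ENNReal.ofReal_ne_top
    · intro k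
      rw [hval k]
      have g1 := Real.Gamma_pos_of_pos ha
      have g2 := Real.Gamma_pos_of_pos hca
      have g3 := Real.Gamma_pos_of_pos hc
      have g4 := r_pos ha hc k
      positivity
  -- pointwise identification of the sum
  have hpt : ∀ t ∈ Ioo (0:ℝ) 1, ∑' k, f k t
      = t ^ (a-1) * (1-t) ^ (c-a-1) * (1-z*t) ^ (-a) := by
    intro t ht
    have hzt0 : 0 ≤ z * t := le_of_lt (mul_pos hz0 ht.1)
    have hzt1 : z * t < 1 := by nlinarith [ht.1, ht.2]
    have hbin := (hasSum_binomial ha hzt0 hzt1).mul_left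
      (t ^ (a-1) * (1-t) ^ (c-a-1))
    have heq : (fun k : ℕ => t ^ (a-1) * (1-t) ^ (c-a-1) * (d a k * (z*t) ^ k))
        = fun k => f k t := by
      funext k
      rw [hf]
      simp only
      have e1 : a + (k:ℝ) - 1 = (a - 1) + k := by ring
      rw [e1, rpow_aux ht.1 (a-1) k, mul_pow]
      ring
    rw [heq] at hbin
    exact hbin.tsum_eq
  -- put everything together
  have hswap2 : ∫ t in Ioo (0:ℝ) 1, t ^ (a-1) * (1-t) ^ (c-a-1) * (1-z*t) ^ (-a)
      = ∑' k, ∫ t in Ioo (0:ℝ) 1, f k t := by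
    rw [← hswap]
    apply MeasureTheory.setIntegral_congr_fun measurableSet_Ioo
    intro t ht
    exact (hpt t ht).symm
  have hsumval : ∑' k, ∫ t in Ioo (0:ℝ) 1, f k t
      = (Real.Gamma a * Real.Gamma (c-a) / Real.Gamma c) * ∑' k, r a c k * z ^ k := by
    simp_rw [hval]
    exact tsum_mul_left
  rw [hyp2F1_eq_tsum, hswap2, hsumval]
  have g1 := Real.Gamma_pos_of_pos ha
  have g2 := Real.Gamma_pos_of_pos hca
  have g3 := Real.Gamma_pos_of_pos hc
  field_simp


/-! ### integrability of three-factor integrands -/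

lemma integrableOn_three {w : ℝ} (hw0 : 0 ≤ w) (hw1 : w < 1) {x y : ℝ} (s : ℝ)
    (hx : -1 < x) (hy : -1 < y) (hs : s ≤ 0) :
    IntegrableOn (fun t : ℝ => t ^ x * (1-t) ^ y * (1 - w*t) ^ s) (Ioo (0:ℝ) 1) := by
  have hw' : (0:ℝ) < 1 - w := by linarith
  apply Integrable.mono ((beta_integrableOn (p := x+1) (q := y+1)
    (by linarith) (by linarith)).const_mul ((1-w) ^ s))
  · exact (contOn_three hw0 hw1 x y s).aestronglyMeasurable measurableSet_Ioo
  · rw [ae_restrict_iff' measurableSet_Ioo]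
    filter_upwards with t ht
    have h0t : 0 < t := ht.1
    have ht1 : t < 1 := ht.2
    have h1t : (0:ℝ) < 1 - t := by linarith
    have hwt : (0:ℝ) < 1 - w*t := by nlinarith
    have hb1 : (1 - w*t) ^ s ≤ (1-w) ^ s := by
      apply Real.rpow_le_rpow_of_nonpos hw' (by nlinarith) hs
    have e1 : t ^ (x+1-1) = t ^ x := by norm_num
    have e2 : (1-t) ^ (y+1-1) = (1-t) ^ y := by norm_num
    rw [Real.norm_eq_abs, Real.norm_eq_abs, abs_of_nonneg (by positivity),
      abs_of_nonneg (by positivity), e1, e2]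
    calc t ^ x * (1-t) ^ y * (1 - w*t) ^ s ≤ t ^ x * (1-t) ^ y * (1-w) ^ s := by
          apply mul_le_mul_of_nonneg_left hb1 (by positivity)
      _ = (1-w) ^ s * (t ^ x * (1-t) ^ y) := by ring

/-! ### derivative of the integral representation -/

lemma deriv_rep {a c : ℝ} (ha : 0 < a) (hac : a < c) {s₀ : ℝ}
    (hs0 : 0 < s₀) (hs1 : s₀ < 1) :
    HasDerivAt (fun z => ∫ t in Ioo (0:ℝ) 1, t ^ (a-1) * (1-t) ^ (c-a-1) * (1-z*t) ^ (-a))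
      (∫ t in Ioo (0:ℝ) 1, t ^ (a-1) * (1-t) ^ (c-a-1) * (a * t * (1-s₀*t) ^ (-a-1))) s₀ := by
  have hca : 0 < c - a := by linarith
  set s₁ : ℝ := (1 + s₀)/2 with hs₁
  have hs₁0 : 0 < s₁ := by rw [hs₁]; linarith
  have hs₁1 : s₁ < 1 := by rw [hs₁]; linarith
  set ε : ℝ := min s₀ ((1 - s₀)/2) with hε
  have hε0 : 0 < ε := by
    rw [hε]
    apply lt_min hs0
    linarith
  have hball : ∀ x ∈ ball s₀ ε, 0 < x ∧ x ≤ s₁ := by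
    intro x hx
    rw [mem_ball, Real.dist_eq, abs_lt] at hx
    constructor
    · have := min_le_left s₀ ((1-s₀)/2)
      linarith [hx.1]
    · have := min_le_right s₀ ((1-s₀)/2)
      rw [hs₁]
      linarith [hx.2]
  set F : ℝ → ℝ → ℝ := fun x t => t ^ (a-1) * (1-t) ^ (c-a-1) * (1-x*t) ^ (-a) with hF
  set F' : ℝ → ℝ → ℝ :=
    fun x t => t ^ (a-1) * (1-t) ^ (c-a-1) * (a * t * (1-x*t) ^ (-a-1)) with hF'
  set bnd : ℝ → ℝ := fun t => a * (t ^ a * (1-t) ^ (c-a-1) * (1-s₁*t) ^ (-a-1)) with hbnd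
  have key := hasDerivAt_integral_of_dominated_loc_of_deriv_le (F := F) (F' := F')
    (x₀ := s₀) (bound := bnd) (μ := volume.restrict (Ioo (0:ℝ) 1)) (ball_mem_nhds s₀ hε0) ?meas ?int ?meas' ?bdd ?bint ?diff
  · exact key.2
  case meas =>
    filter_upwards [ball_mem_nhds s₀ hε0] with x hx
    exact (contOn_three (hball x hx).1.le (lt_of_le_of_lt (hball x hx).2 hs₁1)
      (a-1) (c-a-1) (-a)).aestronglyMeasurable measurableSet_Ioo
  case int =>
    exact integrableOn_three hs0.le hs1 (-a) (by linarith) (by linarith) (by linarith)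
  case meas' =>
    have : ContinuousOn (F' s₀) (Ioo (0:ℝ) 1) := by
      have h1 := contOn_three hs0.le hs1 (a-1+1) (c-a-1) (-a-1)
      intro t ht
      have := ((h1 t ht).const_smul a)
      apply ContinuousWithinAt.congr ((h1 t ht).const_smul a) ?_ ?_
      · intro u hu
        rw [hF']
        simp only [Pi.smul_apply, smul_eq_mul]
        have e : u ^ (a-1+1) = u ^ (a-1) * u := by
          rw [← Real.rpow_add_one hu.1.ne' (a-1)]
        rw [e]
        ring
      · rw [hF']
        simp only [Pi.smul_apply, smul_eq_mul]
        have e : t ^ (a-1+1) = t ^ (a-1) * t := by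
          rw [← Real.rpow_add_one ht.1.ne' (a-1)]
        rw [e]
        ring
    exact this.aestronglyMeasurable measurableSet_Ioo
  case bdd =>
    rw [ae_restrict_iff' measurableSet_Ioo]
    filter_upwards with t ht
    intro x hx
    obtain ⟨hx0, hx1⟩ := hball x hx
    have h0t : 0 < t := ht.1
    have ht1 : t < 1 := ht.2
    have h1t : (0:ℝ) < 1 - t := by linarith
    have hxt : (0:ℝ) < 1 - s₁*t := by nlinarith
    have hxt' : (1:ℝ) - s₁*t ≤ 1 - x*t := by nlinarith
    have hmono : (1 - x*t) ^ (-a-1) ≤ (1 - s₁*t) ^ (-a-1) :=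
      Real.rpow_le_rpow_of_nonpos hxt hxt' (by linarith)
    have hxt0 : (0:ℝ) < 1 - x*t := by nlinarith
    rw [hF', Real.norm_eq_abs, abs_of_nonneg (by positivity)]
    have e : t ^ (a-1) * t = t ^ a := by
      rw [← Real.rpow_add_one h0t.ne' (a-1)]
      norm_num
    calc t ^ (a-1) * (1-t) ^ (c-a-1) * (a * t * (1-x*t) ^ (-a-1))
        ≤ t ^ (a-1) * (1-t) ^ (c-a-1) * (a * t * (1-s₁*t) ^ (-a-1)) := by
          apply mul_le_mul_of_nonneg_left
            (mul_le_mul_of_nonneg_left hmono (by positivity)) (by positivity)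
      _ = a * ((t ^ (a-1) * t) * (1-t) ^ (c-a-1) * (1-s₁*t) ^ (-a-1)) := by ring
      _ = bnd t := by rw [e, hbnd]
  case bint =>
    apply Integrable.const_mul
    exact integrableOn_three hs₁0.le hs₁1 (-a-1) (by linarith) (by linarith) (by linarith)
  case diff =>
    rw [ae_restrict_iff' measurableSet_Ioo]
    filter_upwards with t ht
    intro x hx
    obtain ⟨hx0, hx1⟩ := hball x hx
    have h0t : 0 < t := ht.1
    have ht1 : t < 1 := ht.2
    have hxt : (0:ℝ) < 1 - x*t := by nlinarith [hs₁1]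
    have hbase : HasDerivAt (fun x : ℝ => 1 - x*t) (-t) x := by
      simpa using ((hasDerivAt_id x).mul_const t).const_sub 1
    have hrp := hbase.rpow_const (p := -a) (Or.inl hxt.ne')
    have := hrp.const_mul (t ^ (a-1) * (1-t) ^ (c-a-1))
    refine this.congr_deriv ?_
    symm
    rw [hF']
    ring


/-! ### the Moebius substitution -/

lemma mobius_pointwise {a c s : ℝ} (hs0 : 0 < s) (hs1 : s < 1)
    {u : ℝ} (hu : u ∈ Ioo (0:ℝ) 1) :
    |((s-1)/((1-s*u)^2))| * (((1-u)/(1-s*u)) ^ a * (1-((1-u)/(1-s*u))) ^ (c-a-1) *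
        (1-s*((1-u)/(1-s*u))) ^ (-a-1))
      = (1-s) ^ (c-2*a-1) * (u ^ (c-a-1) * (1-u) ^ a * (1-s*u) ^ (a-c)) := by
  obtain ⟨hu0, hu1⟩ := hu
  have hA : (0:ℝ) < u := hu0
  have hB : (0:ℝ) < 1 - u := by linarith
  have hC : (0:ℝ) < 1 - s := by linarith
  have hD : (0:ℝ) < 1 - s*u := by nlinarith
  have e1 : 1 - (1-u)/(1-s*u) = u*(1-s)/(1-s*u) := by
    rw [eq_div_iff hD.ne']
    linear_combination (-1:ℝ) * div_mul_cancel₀ (1-u) hD.ne'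
  have e2 : 1 - s*((1-u)/(1-s*u)) = (1-s)/(1-s*u) := by
    field_simp
    ring
  have e3 : |((s-1)/((1-s*u)^2))| = (1-s)/((1-s*u)*(1-s*u)) := by
    rw [abs_div, abs_of_neg (by linarith : s - 1 < 0), abs_of_pos (by positivity)]
    ring_nf
  rw [e1, e2, e3]
  have hBD : (0:ℝ) < (1-u)/(1-s*u) := div_pos hB hD
  have hACD : (0:ℝ) < u*(1-s)/(1-s*u) := div_pos (mul_pos hA hC) hD
  have hCD : (0:ℝ) < (1-s)/(1-s*u) := div_pos hC hD
  -- both sides are positive; compare logarithms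
  set L : ℝ := (1-s)/((1-s*u)*(1-s*u)) * (((1-u)/(1-s*u)) ^ a *
    (u*(1-s)/(1-s*u)) ^ (c-a-1) * ((1-s)/(1-s*u)) ^ (-a-1)) with hL
  set R : ℝ := (1-s) ^ (c-2*a-1) * (u ^ (c-a-1) * (1-u) ^ a * (1-s*u) ^ (a-c)) with hR
  have hLpos : 0 < L := by
    apply mul_pos (div_pos hC (mul_pos hD hD))
    exact mul_pos (mul_pos (Real.rpow_pos_of_pos hBD _) (Real.rpow_pos_of_pos hACD _))
      (Real.rpow_pos_of_pos hCD _)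
  have hRpos : 0 < R := by
    apply mul_pos (Real.rpow_pos_of_pos hC _)
    exact mul_pos (mul_pos (Real.rpow_pos_of_pos hA _) (Real.rpow_pos_of_pos hB _))
      (Real.rpow_pos_of_pos hD _)
  have hlog : Real.log L = Real.log R := by
    rw [hL, hR]
    rw [Real.log_mul (by positivity) (by positivity),
      Real.log_mul (by positivity) (by positivity),
      Real.log_mul (by positivity) (by positivity),
      Real.log_mul (Real.rpow_pos_of_pos hC _).ne'
        (by positivity),
      Real.log_mul (by positivity) (by positivity),
      Real.log_mul (by positivity) (by positivity),
      Real.log_div hC.ne' (by positivity),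
      Real.log_mul hD.ne' hD.ne',
      Real.log_rpow hBD, Real.log_rpow hACD, Real.log_rpow hCD,
      Real.log_rpow hC, Real.log_rpow hA, Real.log_rpow hB, Real.log_rpow hD,
      Real.log_div hB.ne' hD.ne', Real.log_div (mul_pos hA hC).ne' hD.ne',
      Real.log_div hC.ne' hD.ne', Real.log_mul hA.ne' hC.ne']
    ring
  calc L = Real.exp (Real.log L) := (Real.exp_log hLpos).symm
    _ = Real.exp (Real.log R) := by rw [hlog]
    _ = R := Real.exp_log hRpos


lemma mobius_subst {a c : ℝ} {s : ℝ} (hs0 : 0 < s) (hs1 : s < 1) :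
    ∫ t in Ioo (0:ℝ) 1, t ^ a * (1-t) ^ (c-a-1) * (1-s*t) ^ (-a-1)
      = (1-s) ^ (c-2*a-1) *
        ∫ u in Ioo (0:ℝ) 1, u ^ (c-a-1) * (1-u) ^ a * (1-s*u) ^ (a-c) := by
  set f : ℝ → ℝ := fun u => (1-u)/(1-s*u) with hf
  set f' : ℝ → ℝ := fun u => (s-1)/((1-s*u)^2) with hf'
  have hD : ∀ u ∈ Ioo (0:ℝ) 1, (0:ℝ) < 1 - s*u := by
    intro u hu
    nlinarith [hu.1, hu.2]
  have hmaps : ∀ u ∈ Ioo (0:ℝ) 1, f u ∈ Ioo (0:ℝ) 1 := by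
    intro u hu
    have h1 := hD u hu
    have h2 : (0:ℝ) < 1 - u := by linarith [hu.2]
    constructor
    · exact div_pos h2 h1
    · rw [div_lt_one h1]
      nlinarith [hu.1]
  have hinvol : ∀ u ∈ Ioo (0:ℝ) 1, f (f u) = u := by
    intro u hu
    have h1 := (hD u hu).ne'
    rw [hf]
    simp only
    rw [div_eq_iff]
    · linear_combination (-1:ℝ) * div_mul_cancel₀ (1-u) h1
    · have e2 : 1 - s*((1-u)/(1-s*u)) = (1-s)/(1-s*u) := by
        field_simp
        ring
      rw [e2]
      exact (div_pos (by linarith) (hD u hu)).ne'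
  have hinj : InjOn f (Ioo (0:ℝ) 1) := by
    intro u1 h1 u2 h2 he
    have := congrArg f he
    rwa [hinvol u1 h1, hinvol u2 h2] at this
  have himg : f '' (Ioo (0:ℝ) 1) = Ioo (0:ℝ) 1 := by
    apply Subset.antisymm
    · rintro t ⟨u, hu, rfl⟩
      exact hmaps u hu
    · intro t ht
      exact ⟨f t, hmaps t ht, hinvol t ht⟩
  have hderiv : ∀ u ∈ Ioo (0:ℝ) 1, HasDerivWithinAt f (f' u) (Ioo (0:ℝ) 1) u := by
    intro u hu
    apply HasDerivAt.hasDerivWithinAt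
    have h1 : HasDerivAt (fun u : ℝ => 1 - u) (-1) u := by
      simpa using (hasDerivAt_id u).const_sub 1
    have h2 : HasDerivAt (fun u : ℝ => 1 - s*u) (-s) u := by
      simpa using ((hasDerivAt_id u).const_mul s).const_sub 1
    have h3 := h1.div h2 (hD u hu).ne'
    refine h3.congr_deriv ?_
    symm
    rw [hf']
    field_simp
    ring
  have hsub := MeasureTheory.integral_image_eq_integral_abs_deriv_smul
    measurableSet_Ioo hderiv hinj
    (fun t => t ^ a * (1-t) ^ (c-a-1) * (1-s*t) ^ (-a-1))
  rw [himg] at hsub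
  rw [hsub]
  rw [← MeasureTheory.integral_const_mul]
  apply MeasureTheory.setIntegral_congr_fun measurableSet_Ioo
  intro u hu
  simp only [smul_eq_mul]
  have := mobius_pointwise (a := a) (c := c) hs0 hs1 hu
  rw [hf, hf']
  simp only
  rw [this]


/-! ### limits as s → 1⁻ -/

lemma tendsto_dct {x y z : ℝ} (hx : -1 < x) (hy : -1 < y) (hz : z ≤ 0)
    (hyz : -1 < y + z) :
    Tendsto (fun s : ℝ => ∫ t in Ioo (0:ℝ) 1, t ^ x * (1-t) ^ y * (1-s*t) ^ z)
      (nhdsWithin 1 (Iio 1))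
      (𝓝 (∫ t in Ioo (0:ℝ) 1, t ^ x * (1-t) ^ (y+z))) := by
  have hIoo : Ioo (0:ℝ) 1 ∈ nhdsWithin (1:ℝ) (Iio 1) :=
    Ioo_mem_nhdsLT_of_mem (by constructor <;> norm_num)
  have hlim_eq : ∫ t in Ioo (0:ℝ) 1, t ^ x * (1-t) ^ (y+z)
      = ∫ t in Ioo (0:ℝ) 1, t ^ x * (1-t) ^ y * (1-t) ^ z := by
    apply MeasureTheory.setIntegral_congr_fun measurableSet_Ioo
    intro t ht
    have h1t : (0:ℝ) < 1 - t := by linarith [ht.2]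
    simp only
    rw [Real.rpow_add h1t, mul_assoc]
  rw [hlim_eq]
  apply MeasureTheory.tendsto_integral_filter_of_dominated_convergence
    (bound := fun t => t ^ x * (1-t) ^ (y+z))
  · filter_upwards [hIoo] with s hs
    exact (contOn_three hs.1.le hs.2 x y z).aestronglyMeasurable measurableSet_Ioo
  · filter_upwards [hIoo] with s hs
    rw [ae_restrict_iff' measurableSet_Ioo]
    filter_upwards with t ht
    have h0t : 0 < t := ht.1
    have h1t : (0:ℝ) < 1 - t := by linarith [ht.2]
    have hst : (0:ℝ) < 1 - s*t := by nlinarith [hs.1, hs.2]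
    have hmono : (1 - s*t) ^ z ≤ (1-t) ^ z :=
      Real.rpow_le_rpow_of_nonpos h1t (by nlinarith [hs.2]) hz
    rw [Real.norm_eq_abs, abs_of_nonneg (by positivity)]
    calc t ^ x * (1-t) ^ y * (1-s*t) ^ z ≤ t ^ x * (1-t) ^ y * (1-t) ^ z :=
          mul_le_mul_of_nonneg_left hmono (by positivity)
      _ = t ^ x * (1-t) ^ (y+z) := by rw [mul_assoc, ← Real.rpow_add h1t]
  · exact beta_integrableOn (p := x+1) (q := y+z+1) (by linarith) (by linarith)
      |>.congr_fun (by intro t ht; norm_num) measurableSet_Ioo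
  · rw [ae_restrict_iff' measurableSet_Ioo]
    filter_upwards with t ht
    have h0t : 0 < t := ht.1
    have h1t : (0:ℝ) < 1 - t := by linarith [ht.2]
    have hcont : ContinuousAt (fun s : ℝ => t ^ x * (1-t) ^ y * (1-s*t) ^ z) 1 := by
      apply ContinuousAt.mul continuousAt_const
      apply ContinuousAt.rpow_const
      · exact (continuous_const.sub (continuous_id.mul continuous_const)).continuousAt
      · left
        simpa using h1t.ne'
    have := hcont.tendsto.mono_left (nhdsWithin_le_nhds (s := Iio (1:ℝ)))
    simpa using this

end Stmt10

open Stmt10 Real MeasureTheory Set Filter in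
/-- Boundary limit as `s → 1⁻`. -/
theorem stmt10 (n : ℕ) (hn : 2 ≤ n) (σ : ℝ) (hσ : 0 < σ) (hσ1 : σ < 1) :
    Filter.Tendsto (fun s : ℝ => s ^ ((n : ℝ) / 2) * (1 - s) ^ (1 - σ) *
        (hyp2F1 (((n : ℝ) - 2 * σ) / 4) (((n : ℝ) - 2 * σ) / 4) ((n : ℝ) / 2) s *
          deriv (hyp2F1 (((n : ℝ) - 2 * σ) / 4) (((n : ℝ) - 2 * σ) / 4) ((n : ℝ) / 2)) s))
      (nhdsWithin 1 (Set.Iio 1))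
      (nhds (Real.Gamma ((n : ℝ) / 2) ^ 2 * Real.Gamma σ * Real.Gamma (1 - σ) /
        (Real.Gamma (((n : ℝ) - 2 * σ) / 4) ^ 2 * Real.Gamma (((n : ℝ) + 2 * σ) / 4) ^ 2))) := by
  have hn2 : (2:ℝ) ≤ (n:ℝ) := by exact_mod_cast hn
  set a : ℝ := ((n : ℝ) - 2 * σ) / 4 with ha_def
  set c : ℝ := (n : ℝ) / 2 with hc_def
  have ha : 0 < a := by rw [ha_def]; linarith
  have hc : 0 < c := by rw [hc_def]; linarith
  have hac : a < c := by rw [ha_def, hc_def]; linarith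
  have hsig : c - 2*a = σ := by rw [ha_def, hc_def]; ring
  have hca : c - a = ((n : ℝ) + 2 * σ) / 4 := by rw [ha_def, hc_def]; ring
  set K : ℝ := Real.Gamma c / (Real.Gamma a * Real.Gamma (c-a)) with hK
  set Fint : ℝ → ℝ := fun s => ∫ t in Ioo (0:ℝ) 1,
    t ^ (a-1) * (1-t) ^ (c-a-1) * (1-s*t) ^ (-a) with hFint
  set G : ℝ → ℝ := fun s => ∫ u in Ioo (0:ℝ) 1,
    u ^ (c-a-1) * (1-u) ^ a * (1-s*u) ^ (a-c) with hG
  -- limits of the two integrals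
  have hA : Tendsto Fint (nhdsWithin 1 (Iio 1))
      (𝓝 (Real.Gamma a * Real.Gamma (c-2*a) / Real.Gamma (c-a))) := by
    have h := tendsto_dct (x := a-1) (y := c-a-1) (z := -a)
      (by linarith) (by linarith) (by linarith) (by linarith)
    have e : ∫ t in Ioo (0:ℝ) 1, t ^ (a-1) * (1-t) ^ ((c-a-1) + -a)
        = Real.Gamma a * Real.Gamma (c-2*a) / Real.Gamma (c-a) := by
      rw [show (c-a-1) + -a = (c-2*a) - 1 by ring]
      have := beta_integral_eval (p := a) (q := c-2*a) ha (by linarith)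
      rw [this, show a + (c-2*a) = c-a by ring]
    rw [e] at h
    exact h
  have hB : Tendsto G (nhdsWithin 1 (Iio 1))
      (𝓝 (Real.Gamma (c-a) * Real.Gamma (2*a-c+1) / Real.Gamma (a+1))) := by
    have h := tendsto_dct (x := c-a-1) (y := a) (z := a-c)
      (by linarith) (by linarith) (by linarith) (by linarith)
    have e : ∫ u in Ioo (0:ℝ) 1, u ^ (c-a-1) * (1-u) ^ (a + (a-c))
        = Real.Gamma (c-a) * Real.Gamma (2*a-c+1) / Real.Gamma (a+1) := by
      rw [show a + (a-c) = (2*a-c+1) - 1 by ring]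
      have := beta_integral_eval (p := c-a) (q := 2*a-c+1) (by linarith) (by linarith)
      rw [show (c-a) - 1 = c-a-1 by ring] at this
      rw [this, show (c-a) + (2*a-c+1) = a+1 by ring]
    rw [e] at h
    exact h
  -- limit of s ^ (n/2)
  have hS : Tendsto (fun s : ℝ => s ^ ((n : ℝ)/2)) (nhdsWithin 1 (Iio 1)) (𝓝 1) := by
    have hcont : ContinuousAt (fun s : ℝ => s ^ ((n : ℝ)/2)) 1 :=
      Real.continuousAt_rpow_const 1 _ (Or.inl one_ne_zero)
    have := hcont.tendsto.mono_left (nhdsWithin_le_nhds (s := Iio (1:ℝ)))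
    simpa using this
  -- the combined limit
  have hmain : Tendsto (fun s : ℝ => s ^ ((n : ℝ)/2) * ((K^2 * a) * (Fint s * G s)))
      (nhdsWithin 1 (Iio 1))
      (𝓝 (1 * ((K^2 * a) * ((Real.Gamma a * Real.Gamma (c-2*a) / Real.Gamma (c-a)) *
        (Real.Gamma (c-a) * Real.Gamma (2*a-c+1) / Real.Gamma (a+1)))))) :=
    hS.mul ((hA.mul hB).const_mul _)
  -- identify the limit constant
  have hgapos : 0 < Real.Gamma a := Real.Gamma_pos_of_pos ha
  have hgcpos : 0 < Real.Gamma c := Real.Gamma_pos_of_pos hc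
  have hgcapos : 0 < Real.Gamma (c-a) := Real.Gamma_pos_of_pos (by linarith)
  have hconst : 1 * ((K^2 * a) * ((Real.Gamma a * Real.Gamma (c-2*a) / Real.Gamma (c-a)) *
        (Real.Gamma (c-a) * Real.Gamma (2*a-c+1) / Real.Gamma (a+1))))
      = Real.Gamma c ^ 2 * Real.Gamma σ * Real.Gamma (1 - σ) /
        (Real.Gamma a ^ 2 * Real.Gamma (c-a) ^ 2) := by
    rw [hsig, show 2*a-c+1 = 1 - σ by rw [← hsig]; ring,
      Real.Gamma_add_one ha.ne', hK]
    field_simp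
  rw [hconst] at hmain
  rw [← hca]
  -- eventual equality of the two functions
  apply Tendsto.congr' ?_ hmain
  have hIoo : Ioo (0:ℝ) 1 ∈ nhdsWithin (1:ℝ) (Iio 1) :=
    Ioo_mem_nhdsLT_of_mem (by constructor <;> norm_num)
  filter_upwards [hIoo] with s hs
  have h1s : (0:ℝ) < 1 - s := by linarith [hs.2]
  -- value of hyp2F1
  have hval : hyp2F1 a a c s = K * Fint s := int_rep ha hac hs.1 hs.2
  -- derivative of hyp2F1
  have hder : deriv (hyp2F1 a a c) s = K * (a * ((1-s) ^ (c-2*a-1) * G s)) := by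
    have hev : hyp2F1 a a c =ᶠ[𝓝 s] (fun z => K * Fint z) := by
      apply eventually_of_mem (isOpen_Ioo.mem_nhds hs)
      intro z hz
      exact int_rep ha hac hz.1 hz.2
    rw [hev.deriv_eq]
    have hd := (deriv_rep ha hac hs.1 hs.2).const_mul K
    rw [hd.deriv]
    congr 1
    have e1 : ∫ t in Ioo (0:ℝ) 1, t ^ (a-1) * (1-t) ^ (c-a-1) * (a * t * (1-s*t) ^ (-a-1))
        = a * ∫ t in Ioo (0:ℝ) 1, t ^ a * (1-t) ^ (c-a-1) * (1-s*t) ^ (-a-1) := by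
      rw [← MeasureTheory.integral_const_mul]
      apply MeasureTheory.setIntegral_congr_fun measurableSet_Ioo
      intro t ht
      have e : t ^ (a-1) * t = t ^ a := by
        rw [← Real.rpow_add_one ht.1.ne' (a-1)]
        norm_num
      calc t ^ (a-1) * (1-t) ^ (c-a-1) * (a * t * (1-s*t) ^ (-a-1))
          = a * ((t ^ (a-1) * t) * (1-t) ^ (c-a-1) * (1-s*t) ^ (-a-1)) := by ring
        _ = a * (t ^ a * (1-t) ^ (c-a-1) * (1-s*t) ^ (-a-1)) := by rw [e]
    rw [e1, mobius_subst hs.1 hs.2]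
  rw [hval, hder]
  have hcollapse : (1-s) ^ (1-σ) * (1-s) ^ (c-2*a-1) = 1 := by
    rw [← Real.rpow_add h1s, hsig]
    norm_num
  calc s ^ ((n : ℝ)/2) * ((K^2 * a) * (Fint s * G s))
      = s ^ ((n : ℝ)/2) * ((K^2 * a) * (Fint s * G s)) *
        ((1-s) ^ (1-σ) * (1-s) ^ (c-2*a-1)) := by rw [hcollapse, mul_one]
    _ = s ^ ((n : ℝ)/2) * (1-s) ^ (1-σ) *
        ((K * Fint s) * (K * (a * ((1-s) ^ (c-2*a-1) * G s)))) := by ring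
end
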